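/- arXiv:2508.06770 — 4 statements merged into one kernel-verified Lean document; each statement's English description precedes it below -/
import Mathlib

section
/- For every integer n ≥ 1, every partition λ ⊢ n and every permutation σ ∈ S_n, the character satisfies |ch^λ(σ)| ≤ 2^n · δ(λ)^{cyc(σ)}. -/
open scoped BigOperators

namespace ThickHookPaper

/-- The diagonal length `δ(λ)` of a Young diagram: the number of diagonal boxes `(i,i)` in `λ`. -/
def diagLen (l : YoungDiagram) : ℕ := (l.cells.filter (fun u => u.1 = u.2)).card

/-- The maximal hook length `s(λ) = λ₁ + λ₁' - 1` of a Young diagram. -/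
def maxHook (l : YoungDiagram) : ℕ := l.rowLen 0 + l.colLen 0 - 1

/-- The hook length of the box `u = (i, j)` in `λ`. -/
def hook (l : YoungDiagram) (u : ℕ × ℕ) : ℕ :=
  (l.rowLen u.1 - u.2) + (l.colLen u.2 - u.1) - 1

/-- The number of standard tableaux of the skew shape `λ \ μ`, defined as the number of
saturated chains of Young diagrams from `μ` to `λ` (each step adding exactly one box). -/
noncomputable def skewSYT (μ l : YoungDiagram) : ℕ :=
  Nat.card {f : Fin (l.card - μ.card + 1) → YoungDiagram //
    f 0 = μ ∧ f (Fin.last _) = l ∧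
    ∀ i : Fin (l.card - μ.card),
      f i.castSucc ≤ f i.succ ∧ (f i.succ).card = (f i.castSucc).card + 1}

/-- The number of standard Young tableaux of shape `λ`, i.e. the dimension `d_λ`. -/
noncomputable def dim (l : YoungDiagram) : ℕ := skewSYT ⊥ l

/-! ### Ribbons and the Murnaghan--Nakayama character -/

/-- Two boxes are adjacent if they share an edge. -/
def Adj (u v : ℕ × ℕ) : Prop :=
  (u.1 = v.1 ∧ (u.2 + 1 = v.2 ∨ v.2 + 1 = u.2)) ∨
    (u.2 = v.2 ∧ (u.1 + 1 = v.1 ∨ v.1 + 1 = u.1))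

/-- A finite set of boxes is connected if any two of its boxes are linked by a path of
adjacent boxes inside the set. -/
def ConnectedCells (c : Finset (ℕ × ℕ)) : Prop :=
  ∀ u ∈ c, ∀ v ∈ c, Relation.ReflTransGen (fun x y => x ∈ c ∧ y ∈ c ∧ Adj x y) u v

/-- A set of boxes contains no `2 × 2` square. -/
def No2x2 (c : Finset (ℕ × ℕ)) : Prop :=
  ∀ i j : ℕ, ¬ ((i, j) ∈ c ∧ (i + 1, j) ∈ c ∧ (i, j + 1) ∈ c ∧ (i + 1, j + 1) ∈ c)

/-- `IsRibbon μ l` : the skew diagram `l \ μ` is a ribbon (nonempty, connected, no 2×2 square). -/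
def IsRibbon (μ l : YoungDiagram) : Prop :=
  μ ≤ l ∧ (l.cells \ μ.cells).Nonempty ∧ ConnectedCells (l.cells \ μ.cells) ∧
    No2x2 (l.cells \ μ.cells)

/-- The height of a set of boxes: the difference between the largest and smallest
row indices occurring in it. -/
noncomputable def cellsHeight (c : Finset (ℕ × ℕ)) : ℕ :=
  c.sup Prod.fst - sInf (Prod.fst '' (c : Set (ℕ × ℕ)))

/-- `IsRibbonTableau l α f` : `f` is a ribbon tableau of shape `l` and weight `α`, i.e. a
chain `⊥ = f 0 ⊆ f 1 ⊆ ... ⊆ f N = l` where each successive skew diagram is a ribbon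
with `α i` boxes. -/
def IsRibbonTableau (l : YoungDiagram) (α : List ℕ) (f : Fin (α.length + 1) → YoungDiagram) :
    Prop :=
  f 0 = ⊥ ∧ f (Fin.last _) = l ∧
  ∀ i : Fin α.length,
    IsRibbon (f i.castSucc) (f i.succ) ∧
      ((f i.succ).cells \ (f i.castSucc).cells).card = α.get i

/-- The total height of a ribbon tableau: the sum of the heights of its ribbons. -/
noncomputable def tabHeight (N : ℕ) (f : Fin (N + 1) → YoungDiagram) : ℕ :=
  ∑ i : Fin N, cellsHeight ((f i.succ).cells \ (f i.castSucc).cells)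

/-- The Murnaghan--Nakayama alternating sum over ribbon tableaux of shape `l` and weight `α`. -/
noncomputable def charMN (l : YoungDiagram) (α : List ℕ) : ℤ :=
  ∑ᶠ f ∈ {f : Fin (α.length + 1) → YoungDiagram | IsRibbonTableau l α f},
    (-1 : ℤ) ^ tabHeight α.length f

/-- The cycle type of a permutation including fixed points (as parts equal to `1`). -/
def fullCycleType {n : ℕ} (σ : Equiv.Perm (Fin n)) : Multiset ℕ :=
  σ.cycleType + Multiset.replicate (n - σ.support.card) 1

/-- The character `ch^λ(σ)` of the irreducible representation of `S_n` indexed by `λ ⊢ n`,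
defined via the Murnaghan--Nakayama rule. -/
noncomputable def charPerm (l : YoungDiagram) {n : ℕ} (σ : Equiv.Perm (Fin n)) : ℤ :=
  charMN l (fullCycleType σ).toList

/-- The total number of cycles of `σ`, fixed points counted as 1-cycles. -/
def cyc {n : ℕ} (σ : Equiv.Perm (Fin n)) : ℕ := Multiset.card (fullCycleType σ)

/-- `|σ|`: the minimal number of transpositions whose product is `σ`, which equals
`n` minus the number of cycles of `σ` (fixed points included). -/
def transLen {n : ℕ} (σ : Equiv.Perm (Fin n)) : ℕ := n - cyc σ

/-! ### Excited diagrams -/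

/-- The upper-right square of a box. -/
def URS (u : ℕ × ℕ) : Finset (ℕ × ℕ) :=
  {u, (u.1 + 1, u.2), (u.1, u.2 + 1), (u.1 + 1, u.2 + 1)}

/-- One simple excitation step: an excitable box of `E` is moved diagonally up-right. -/
def ExciteStep (l : YoungDiagram) (E E' : Finset (ℕ × ℕ)) : Prop :=
  ∃ u ∈ E, URS u ⊆ l.cells ∧ E ∩ URS u = {u} ∧
    E' = insert (u.1 + 1, u.2 + 1) (E.erase u)

/-- The set `𝓔(λ, μ)` of excited diagrams of `μ` in `λ`. -/
def Excited (l μ : YoungDiagram) : Set (Finset (ℕ × ℕ)) :=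
  {E | Relation.ReflTransGen (ExciteStep l) μ.cells E}

/-- The excited sum `S(λ, μ) = Σ_{E ∈ 𝓔(λ,μ)} Π_{u ∈ E} H(λ, u)`. -/
noncomputable def excitedSum (l μ : YoungDiagram) : ℕ :=
  ∑ᶠ E ∈ Excited l μ, ∏ u ∈ E, hook l u

/-! ### Rectangles, rows -/

/-- The rectangular Young diagram `[a^b]` with `b` rows of length `a`. -/
def rect (a b : ℕ) : YoungDiagram :=
  ⟨Finset.range b ×ˢ Finset.range a, by
    rintro ⟨i, j⟩ ⟨i', j'⟩ ⟨h1, h2⟩ hu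
    simp only [Finset.coe_product, Set.mem_prod, Finset.mem_coe, Finset.mem_range] at *
    exact ⟨lt_of_le_of_lt h1 hu.1, lt_of_le_of_lt h2 hu.2⟩⟩

/-- The one-row Young diagram `[ℓ]`. -/
def rowDiagram (ℓ : ℕ) : YoungDiagram := rect ℓ 1

/-! ### Thick hook decompositions -/

/-- The boxes of `λ` whose diagonal index `min i j` lies in `[lo, hi)`: this is the thick hook
`λ^{(lo+1) → hi}` in the (1-indexed) notation of the paper. -/
def thickHookCells (l : YoungDiagram) (lo hi : ℕ) : Finset (ℕ × ℕ) :=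
  l.cells.filter (fun u => lo ≤ min u.1 u.2 ∧ min u.1 u.2 < hi)

/-- An `(a, b)` thick hook decomposition of `λ`: diagonal indices
`0 = i_0 < i_1 < ... < i_p = δ(λ)` such that each thick hook
`T_j = λ^{(i_{j-1}+1) → i_j}` has between `a` and `b` boxes. -/
structure ThickHookDecomp (l : YoungDiagram) (a b : ℝ) where
  p : ℕ
  p_pos : 0 < p
  idx : ℕ → ℕ
  idx_zero : idx 0 = 0
  idx_last : idx p = diagLen l
  idx_strictMono : ∀ j < p, idx j < idx (j + 1)
  size_lb : ∀ j < p, a ≤ ((thickHookCells l (idx j) (idx (j + 1))).card : ℝ)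
  size_ub : ∀ j < p, ((thickHookCells l (idx j) (idx (j + 1))).card : ℝ) ≤ b

/-- The corners of a Young diagram: boxes `u ∈ λ` such that neither the box to the right
nor the box above (in the French convention: the next box in the row and in the column)
belongs to `λ`. -/
def corners (l : YoungDiagram) : Finset (ℕ × ℕ) :=
  l.cells.filter (fun u => (u.1, u.2 + 1) ∉ l ∧ (u.1 + 1, u.2) ∉ l)


namespace CharBound

/-- diagonal index of a cell -/
def dgg (u : ℕ × ℕ) : ℤ := (u.2 : ℤ) - (u.1 : ℤ)

lemma mem_strip {μ ν : YoungDiagram} {u : ℕ × ℕ} :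
    u ∈ ν.cells \ μ.cells ↔ u ∈ ν ∧ u ∉ μ := by
  simp [Finset.mem_sdiff, YoungDiagram.mem_cells]

lemma not_mem_up_right {μ : YoungDiagram} {i1 j1 i2 j2 : ℕ} (hi : i1 ≤ i2) (hj : j1 ≤ j2)
    (h : (i1, j1) ∉ μ) : (i2, j2) ∉ μ := fun hm => h (μ.up_left_mem hi hj hm)

lemma no_diag_pair {μ ν : YoungDiagram} (h2 : No2x2 (ν.cells \ μ.cells))
    {u1 u2 v1 v2 : ℕ} (hu : (u1, u2) ∈ ν.cells \ μ.cells) (hv : (v1, v2) ∈ ν.cells \ μ.cells)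
    (h1 : u1 < v1) (hd : (u2 : ℤ) - (u1 : ℤ) = (v2 : ℤ) - (v1 : ℤ)) : False := by
  rw [mem_strip] at hu hv
  have h2' : u2 < v2 := by omega
  have hA : (u1 + 1, u2 + 1) ∈ ν := ν.up_left_mem (by omega) (by omega) hv.1
  have hB : (u1 + 1, u2) ∈ ν := ν.up_left_mem le_rfl (by omega) hA
  have hC : (u1, u2 + 1) ∈ ν := ν.up_left_mem (by omega) le_rfl hA
  exact h2 u1 u2 ⟨mem_strip.mpr hu,
    mem_strip.mpr ⟨hB, not_mem_up_right (by omega) le_rfl hu.2⟩,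
    mem_strip.mpr ⟨hC, not_mem_up_right le_rfl (by omega) hu.2⟩,
    mem_strip.mpr ⟨hA, not_mem_up_right (by omega) (by omega) hu.2⟩⟩

lemma dgg_injOn {μ ν : YoungDiagram} (h2 : No2x2 (ν.cells \ μ.cells))
    {u v : ℕ × ℕ} (hu : u ∈ ν.cells \ μ.cells) (hv : v ∈ ν.cells \ μ.cells)
    (hdg : dgg u = dgg v) : u = v := by
  obtain ⟨u1, u2⟩ := u; obtain ⟨v1, v2⟩ := v
  simp only [dgg] at hdg
  rcases lt_trichotomy u1 v1 with h | h | h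
  · exact absurd (no_diag_pair h2 hu hv h hdg) not_false
  · have : u2 = v2 := by omega
    simp [h, this]
  · exact absurd (no_diag_pair h2 hv hu h hdg.symm) not_false

lemma adj_dgg {u v : ℕ × ℕ} (h : Adj u v) : dgg v = dgg u + 1 ∨ dgg v = dgg u - 1 := by
  obtain ⟨u1, u2⟩ := u; obtain ⟨v1, v2⟩ := v
  simp only [Adj, dgg] at *
  omega

lemma exists_dgg_eq {s : Finset (ℕ × ℕ)} (hcon : ConnectedCells s) {u v : ℕ × ℕ}
    (hu : u ∈ s) (hv : v ∈ s) {d : ℤ} (hud : dgg u ≤ d) (hvd : d ≤ dgg v) :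
    ∃ w ∈ s, dgg w = d := by
  have key : ∀ v', Relation.ReflTransGen (fun x y => x ∈ s ∧ y ∈ s ∧ Adj x y) u v' →
      d ≤ dgg v' → ∃ w ∈ s, dgg w = d := by
    intro v' hpath
    induction hpath with
    | refl => exact fun h => ⟨u, hu, le_antisymm hud h⟩
    | @tail b c hab step ih =>
      intro hvd'
      by_cases hcase : d ≤ dgg b
      · exact ih hcase
      · obtain ⟨hbs, hcs, hadj⟩ := step
        rcases adj_dgg hadj with h1 | h1
        · exact ⟨c, hcs, by omega⟩
        · omega
  exact key v (hcon u hu v hv) hvd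

/-- number of cells of `ν` on diagonal `d` -/
def dcount (ν : YoungDiagram) (d : ℤ) : ℕ :=
  (ν.cells.filter (fun u => dgg u = d)).card

lemma mem_iff_min_lt_dcount {ν : YoungDiagram} (i j : ℕ) :
    (i, j) ∈ ν ↔ min i j < dcount ν ((j : ℤ) - (i : ℤ)) := by
  constructor
  · intro h
    have hcard := Finset.card_le_card_of_injOn (fun a => (i - a, j - a))
      (s := Finset.range (min i j + 1))
      (t := ν.cells.filter (fun u => dgg u = (j : ℤ) - (i : ℤ))) ?_ ?_
    · rw [Finset.card_range] at hcard
      simp only [dcount]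
      omega
    · intro a ha
      rw [Finset.mem_coe] at ha ⊢
      simp only [Finset.mem_range] at ha
      simp only [Finset.mem_filter, YoungDiagram.mem_cells]
      refine ⟨ν.up_left_mem (Nat.sub_le _ _) (Nat.sub_le _ _) h, ?_⟩
      simp only [dgg]
      omega
    · intro a ha b hb hab
      simp only [Finset.coe_range, Set.mem_Iio] at ha hb
      have h1 := congrArg Prod.fst hab
      simp only at h1
      omega
  · intro h
    by_contra hmem
    have hcard := Finset.card_le_card_of_injOn (fun u : ℕ × ℕ => min u.1 u.2)
      (s := ν.cells.filter (fun u => dgg u = (j : ℤ) - (i : ℤ)))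
      (t := Finset.range (min i j)) ?_ ?_
    · simp only [dcount] at h
      simp only [Finset.card_range] at hcard
      omega
    · intro u hu
      rw [Finset.mem_coe, Finset.mem_filter] at hu
      rw [Finset.mem_coe]
      simp only [Finset.mem_filter, YoungDiagram.mem_cells, dgg] at hu
      simp only [Finset.mem_range]
      by_contra hge
      push_neg at hge
      have hij : i ≤ u.1 ∧ j ≤ u.2 := by omega
      exact hmem (ν.up_left_mem hij.1 hij.2 (by simpa using hu.1))
    · intro u hu v hv huv
      obtain ⟨a, b⟩ := u; obtain ⟨a', b'⟩ := v
      rw [Finset.mem_coe, Finset.mem_filter] at hu hv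
      simp only [Finset.mem_coe, Finset.mem_filter, dgg] at hu hv
      have h1 := hu.2; have h2 := hv.2
      simp only at huv
      have : a = a' ∧ b = b' := by omega
      simp [this.1, this.2]

lemma eq_of_dcount_eq {μ ν : YoungDiagram} (h : ∀ d, dcount μ d = dcount ν d) : μ = ν := by
  ext x
  obtain ⟨i, j⟩ := x
  rw [YoungDiagram.mem_cells, YoungDiagram.mem_cells, mem_iff_min_lt_dcount,
    mem_iff_min_lt_dcount, h]


lemma mem_of_le {μ ν : YoungDiagram} (h : μ ≤ ν) {u : ℕ × ℕ} (hu : u ∈ μ) : u ∈ ν := by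
  rw [← YoungDiagram.mem_cells] at *
  exact YoungDiagram.cells_subset_iff.mpr h hu

lemma strip_rowLen_le {μ ν : YoungDiagram} {u : ℕ × ℕ} (hu : u ∈ ν.cells \ μ.cells) :
    μ.rowLen u.1 ≤ u.2 := by
  obtain ⟨a, b⟩ := u
  have := (mem_strip.mp hu).2
  rw [YoungDiagram.mem_iff_lt_rowLen] at this
  show μ.rowLen a ≤ b
  omega

lemma strip_colLen_le {μ ν : YoungDiagram} {u : ℕ × ℕ} (hu : u ∈ ν.cells \ μ.cells) :
    μ.colLen u.2 ≤ u.1 := by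
  obtain ⟨a, b⟩ := u
  have := (mem_strip.mp hu).2
  rw [YoungDiagram.mem_iff_lt_colLen] at this
  show μ.colLen b ≤ a
  omega

lemma strip_bottom {μ ν : YoungDiagram} (hne : ((ν.cells \ μ.cells)).Nonempty) :
    ((ν.cells \ μ.cells).sup Prod.fst,
      μ.rowLen ((ν.cells \ μ.cells).sup Prod.fst)) ∈ ν.cells \ μ.cells ∧
    ∀ u ∈ ν.cells \ μ.cells,
      (μ.rowLen ((ν.cells \ μ.cells).sup Prod.fst) : ℤ) -
        (((ν.cells \ μ.cells).sup Prod.fst : ℕ) : ℤ) ≤ dgg u := by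
  set s := ν.cells \ μ.cells with hs
  set x := s.sup Prod.fst with hxdef
  obtain ⟨u0, hu0, hu0x⟩ := Finset.exists_mem_eq_sup s hne Prod.fst
  obtain ⟨a, b⟩ := u0
  have hax : x = a := hu0x
  have hrow : μ.rowLen a ≤ b := strip_rowLen_le hu0
  have hmem : (x, μ.rowLen x) ∈ s := by
    rw [hax]
    rw [mem_strip]
    constructor
    · exact ν.up_left_mem le_rfl hrow (mem_strip.mp hu0).1
    · rw [YoungDiagram.mem_iff_lt_rowLen]
      omega
  refine ⟨hmem, ?_⟩
  intro u hu
  obtain ⟨c, d⟩ := u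
  have h1 : c ≤ x := Finset.le_sup (f := Prod.fst) hu
  have h2 : μ.rowLen x ≤ μ.rowLen c := μ.rowLen_anti c x h1
  have h3 : μ.rowLen c ≤ d := strip_rowLen_le hu
  simp only [dgg]
  omega

lemma strip_top {μ ν : YoungDiagram} (hne : ((ν.cells \ μ.cells)).Nonempty) :
    (μ.colLen ((ν.cells \ μ.cells).sup Prod.snd),
      (ν.cells \ μ.cells).sup Prod.snd) ∈ ν.cells \ μ.cells ∧
    ∀ u ∈ ν.cells \ μ.cells,
      dgg u ≤ (((ν.cells \ μ.cells).sup Prod.snd : ℕ) : ℤ) -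
        (μ.colLen ((ν.cells \ μ.cells).sup Prod.snd) : ℤ) := by
  set s := ν.cells \ μ.cells with hs
  set c := s.sup Prod.snd with hcdef
  obtain ⟨u0, hu0, hu0c⟩ := Finset.exists_mem_eq_sup s hne Prod.snd
  obtain ⟨a, b⟩ := u0
  have hbc : c = b := hu0c
  have hcol : μ.colLen b ≤ a := strip_colLen_le hu0
  have hmem : (μ.colLen c, c) ∈ s := by
    rw [hbc, mem_strip]
    constructor
    · exact ν.up_left_mem hcol le_rfl (mem_strip.mp hu0).1
    · rw [YoungDiagram.mem_iff_lt_colLen]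
      omega
  refine ⟨hmem, ?_⟩
  intro u hu
  obtain ⟨e, d⟩ := u
  have h1 : d ≤ c := Finset.le_sup (f := Prod.snd) hu
  have h2 : μ.colLen c ≤ μ.colLen d := μ.colLen_anti d c h1
  have h3 : μ.colLen d ≤ e := strip_colLen_le hu
  simp only [dgg]
  omega

lemma lt_diagLen {l : YoungDiagram} {i : ℕ} (h : (i, i) ∈ l) : i < diagLen l := by
  have hcard := Finset.card_le_card_of_injOn (fun a => (a, a))
    (s := Finset.range (i + 1)) (t := l.cells.filter (fun u => u.1 = u.2)) ?_ ?_
  · rw [Finset.card_range] at hcard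
    simp only [diagLen]
    omega
  · intro a ha
    rw [Finset.mem_coe] at ha ⊢
    simp only [Finset.mem_range] at ha
    simp only [Finset.mem_filter, YoungDiagram.mem_cells]
    exact ⟨l.up_left_mem (by omega) (by omega) h, trivial⟩
  · intro a _ b _ hab
    simpa using congrArg Prod.fst hab

/-- The code of a ribbon step. -/
def stepCode (δ : ℕ) (μ ν : YoungDiagram) : ℕ :=
  if (ν.cells \ μ.cells).sup Prod.fst ≤ μ.rowLen ((ν.cells \ μ.cells).sup Prod.fst) then
    (ν.cells \ μ.cells).sup Prod.fst
  else if (ν.cells \ μ.cells).sup Prod.snd < μ.colLen ((ν.cells \ μ.cells).sup Prod.snd) then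
    δ + (ν.cells \ μ.cells).sup Prod.snd
  else 2 * δ + ((ν.cells \ μ.cells).sup Prod.fst -
    μ.rowLen ((ν.cells \ μ.cells).sup Prod.fst) - 1)

/-- Decoding: the minimal diagonal of the ribbon, from the code. -/
def decodeD (δ t v : ℕ) (μ : YoungDiagram) : ℤ :=
  if v < δ then (μ.rowLen v : ℤ) - (v : ℤ)
  else if v < 2 * δ then ((v - δ : ℕ) : ℤ) - (μ.colLen (v - δ) : ℤ) - ((t - 1 : ℕ) : ℤ)
  else -(((v - 2 * δ : ℕ) : ℤ)) - 1

lemma strip_data {l μ ν : YoungDiagram} {t : ℕ} (hr : IsRibbon μ ν) (hl : ν ≤ l)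
    (hc : (ν.cells \ μ.cells).card = t) (ht : 1 ≤ t) :
    ∃ d : ℤ, (ν.cells \ μ.cells).image dgg = Finset.Icc d (d + ((t - 1 : ℕ) : ℤ)) ∧
      stepCode (diagLen l) μ ν < 2 * diagLen l + (t - 1) ∧
      decodeD (diagLen l) t (stepCode (diagLen l) μ ν) μ = d := by
  obtain ⟨hμν, hne, hcon, h2x2⟩ := hr
  set s := ν.cells \ μ.cells with hs
  set x := s.sup Prod.fst with hxdef
  set c := s.sup Prod.snd with hcdef
  set δ := diagLen l with hδdef
  obtain ⟨hbmem0, hbmin0⟩ := strip_bottom (μ := μ) (ν := ν) hne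
  obtain ⟨htmem0, htmax0⟩ := strip_top (μ := μ) (ν := ν) hne
  set d : ℤ := (μ.rowLen x : ℤ) - (x : ℤ) with hd
  set e : ℤ := (c : ℤ) - (μ.colLen c : ℤ) with he
  have hbmem : (x, μ.rowLen x) ∈ s := hbmem0
  have hbmin : ∀ u ∈ s, d ≤ dgg u := fun u hu => hbmin0 u hu
  have htmem : (μ.colLen c, c) ∈ s := htmem0
  have htmax : ∀ u ∈ s, dgg u ≤ e := fun u hu => htmax0 u hu
  clear hbmem0 hbmin0 htmem0 htmax0
  have hdgb : dgg (x, μ.rowLen x) = d := by simp [dgg, hd]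
  have hdgt : dgg (μ.colLen c, c) = e := by simp [dgg, he]
  have hde : d ≤ e := hdgb ▸ htmax _ hbmem
  -- image is the interval [d, e]
  have himage : s.image dgg = Finset.Icc d e := by
    apply Finset.Subset.antisymm
    · intro z hz
      obtain ⟨w, hw, rfl⟩ := Finset.mem_image.mp hz
      exact Finset.mem_Icc.mpr ⟨hbmin w hw, htmax w hw⟩
    · intro z hz
      rw [Finset.mem_Icc] at hz
      obtain ⟨w, hw, hwz⟩ := exists_dgg_eq hcon hbmem htmem (d := z)
        (by omega) (by omega)
      exact Finset.mem_image.mpr ⟨w, hw, hwz⟩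
  have hcardim : (s.image dgg).card = t := by
    rw [← hc]
    apply Finset.card_image_of_injOn
    intro u hu v hv huv
    exact dgg_injOn h2x2 hu hv huv
  have het : e = d + ((t - 1 : ℕ) : ℤ) := by
    rw [himage, Int.card_Icc] at hcardim
    omega
  have hcode_def : stepCode δ μ ν =
      (if x ≤ μ.rowLen x then x else if c < μ.colLen c then δ + c
        else 2 * δ + (x - μ.rowLen x - 1)) := rfl
  have hmain : stepCode δ μ ν < 2 * δ + (t - 1) ∧
      decodeD δ t (stepCode δ μ ν) μ = d := by
    by_cases hA : x ≤ μ.rowLen x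
    · have hxx : (x, x) ∈ ν := ν.up_left_mem le_rfl hA (mem_strip.mp hbmem).1
      have hxδ : x < δ := lt_diagLen (mem_of_le hl hxx)
      rw [hcode_def, if_pos hA]
      refine ⟨by omega, ?_⟩
      unfold decodeD
      rw [if_pos hxδ]
    · by_cases hB : c < μ.colLen c
      · have hcc : (c, c) ∈ ν := ν.up_left_mem (le_of_lt hB) le_rfl (mem_strip.mp htmem).1
        have hcδ : c < δ := lt_diagLen (mem_of_le hl hcc)
        rw [hcode_def, if_neg hA, if_pos hB]
        refine ⟨by omega, ?_⟩
        unfold decodeD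
        rw [if_neg (by omega), if_pos (by omega)]
        have hsub : δ + c - δ = c := by omega
        rw [hsub]
        omega
      · rw [hcode_def, if_neg hA, if_neg hB]
        have hd1 : d ≤ -1 := by omega
        have he0 : (0 : ℤ) ≤ e := by omega
        refine ⟨by omega, ?_⟩
        unfold decodeD
        rw [if_neg (by omega), if_neg (by omega)]
        have hsub : 2 * δ + (x - μ.rowLen x - 1) - 2 * δ = x - μ.rowLen x - 1 := by omega
        rw [hsub]
        omega
  exact ⟨d, by rw [himage, het], hmain.1, hmain.2⟩


lemma dcount_split {μ ν : YoungDiagram} (hμν : μ ≤ ν) (e : ℤ) :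
    dcount ν e = dcount μ e + ((ν.cells \ μ.cells).filter (fun u => dgg u = e)).card := by
  have hsub : μ.cells ⊆ ν.cells := YoungDiagram.cells_subset_iff.mpr hμν
  have hcells : ν.cells = μ.cells ∪ (ν.cells \ μ.cells) := by
    rw [Finset.union_sdiff_of_subset hsub]
  unfold dcount
  have hdisj : Disjoint (μ.cells.filter (fun u => dgg u = e))
      ((ν.cells \ μ.cells).filter (fun u => dgg u = e)) :=
    Finset.disjoint_filter_filter Finset.disjoint_sdiff
  conv_lhs => rw [hcells]
  rw [Finset.filter_union, Finset.card_union_of_disjoint hdisj]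

lemma filter_card_of_injOn {s : Finset (ℕ × ℕ)}
    (hinj : ∀ u ∈ s, ∀ v ∈ s, dgg u = dgg v → u = v) (e : ℤ) :
    (s.filter (fun u => dgg u = e)).card = if e ∈ s.image dgg then 1 else 0 := by
  split_ifs with h
  · obtain ⟨u, hu, hue⟩ := Finset.mem_image.mp h
    rw [Finset.card_eq_one]
    refine ⟨u, ?_⟩
    ext v
    simp only [Finset.mem_filter, Finset.mem_singleton]
    constructor
    · rintro ⟨hv, hve⟩
      exact hinj v hv u hu (by rw [hve, hue])
    · rintro rfl
      exact ⟨hu, hue⟩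
  · rw [Finset.card_eq_zero, Finset.filter_eq_empty_iff]
    intro u hu hue
    exact h (Finset.mem_image.mpr ⟨u, hu, hue⟩)

lemma step_determined {l μ ν₁ ν₂ : YoungDiagram} {t : ℕ} (ht : 1 ≤ t)
    (h1 : IsRibbon μ ν₁) (h2 : IsRibbon μ ν₂) (hl1 : ν₁ ≤ l) (hl2 : ν₂ ≤ l)
    (hc1 : (ν₁.cells \ μ.cells).card = t) (hc2 : (ν₂.cells \ μ.cells).card = t)
    (hcode : stepCode (diagLen l) μ ν₁ % (2 * diagLen l + (t - 1)) =
             stepCode (diagLen l) μ ν₂ % (2 * diagLen l + (t - 1))) : ν₁ = ν₂ := by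
  obtain ⟨d1, him1, hv1, hdec1⟩ := strip_data h1 hl1 hc1 ht
  obtain ⟨d2, him2, hv2, hdec2⟩ := strip_data h2 hl2 hc2 ht
  rw [Nat.mod_eq_of_lt hv1, Nat.mod_eq_of_lt hv2] at hcode
  have hd12 : d1 = d2 := by rw [← hdec1, ← hdec2, hcode]
  have himeq : (ν₁.cells \ μ.cells).image dgg = (ν₂.cells \ μ.cells).image dgg := by
    rw [him1, him2, hd12]
  apply eq_of_dcount_eq
  intro e
  rw [dcount_split h1.1 e, dcount_split h2.1 e,
    filter_card_of_injOn (fun u hu v hv h => dgg_injOn h1.2.2.2 hu hv h) e,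
    filter_card_of_injOn (fun u hu v hv h => dgg_injOn h2.2.2.2 hu hv h) e, himeq]


lemma tab_mono {l : YoungDiagram} {α : List ℕ} {f : Fin (α.length + 1) → YoungDiagram}
    (hf : IsRibbonTableau l α f) : Monotone f :=
  Fin.monotone_iff_le_succ.mpr fun i => (hf.2.2 i).1.1

lemma tab_le_l {l : YoungDiagram} {α : List ℕ} {f : Fin (α.length + 1) → YoungDiagram}
    (hf : IsRibbonTableau l α f) (j : Fin (α.length + 1)) : f j ≤ l := by
  have := tab_mono hf (Fin.le_last j)
  rwa [hf.2.1] at this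

lemma tab_eq_of_code_eq {l : YoungDiagram} {α : List ℕ} (hpos : ∀ a ∈ α, 1 ≤ a)
    {f g : Fin (α.length + 1) → YoungDiagram}
    (hf : IsRibbonTableau l α f) (hg : IsRibbonTableau l α g)
    (h : ∀ i : Fin α.length,
      stepCode (diagLen l) (f i.castSucc) (f i.succ) % (2 * diagLen l + (α.get i - 1)) =
      stepCode (diagLen l) (g i.castSucc) (g i.succ) % (2 * diagLen l + (α.get i - 1))) :
    f = g := by
  funext j
  induction j using Fin.induction with
  | zero => rw [hf.1, hg.1]
  | succ i ih =>
    have hcodei := h i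
    rw [← ih] at hcodei
    have hg1 : IsRibbon (f i.castSucc) (g i.succ) := by rw [ih]; exact (hg.2.2 i).1
    have hg2 : ((g i.succ).cells \ (f i.castSucc).cells).card = α.get i := by
      rw [ih]; exact (hg.2.2 i).2
    exact step_determined (hpos _ (α.get_mem i)) (hf.2.2 i).1
      hg1 (tab_le_l hf i.succ) (tab_le_l hg i.succ)
      (hf.2.2 i).2 hg2 hcodei

lemma factor_le {δ t : ℕ} (hδ : 1 ≤ δ) (ht : 1 ≤ t) : 2 * δ + (t - 1) ≤ 2 ^ t * δ := by
  obtain ⟨t', rfl⟩ : ∃ t', t = t' + 1 := ⟨t - 1, by omega⟩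
  have h2 : t' + 2 ≤ 2 ^ (t' + 1) := Nat.lt_two_pow_self
  have h3 : (t' + 2) * δ ≤ 2 ^ (t' + 1) * δ := Nat.mul_le_mul_right δ h2
  have h5 : t' ≤ t' * δ := Nat.le_mul_of_pos_right t' hδ
  have h6 : (t' + 2) * δ = 2 * δ + t' * δ := by ring
  have h7 : t' + 1 - 1 = t' := by omega
  rw [h7]
  omega

lemma charMN_abs_le {l : YoungDiagram} {α : List ℕ} (hpos : ∀ a ∈ α, 1 ≤ a)
    (hδ : 0 < diagLen l) :
    |charMN l α| ≤ (2 : ℤ) ^ α.sum * (diagLen l : ℤ) ^ α.length := by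
  classical
  set δ := diagLen l with hδdef
  set S := {f : Fin (α.length + 1) → YoungDiagram | IsRibbonTableau l α f} with hS
  set m : Fin α.length → ℕ := fun i => 2 * δ + (α.get i - 1) with hm
  have hmpos : ∀ i, 0 < m i := fun i => by simp only [hm]; omega
  set Φ : (Fin (α.length + 1) → YoungDiagram) → (∀ i : Fin α.length, Fin (m i)) :=
    fun f i => ⟨stepCode δ (f i.castSucc) (f i.succ) % m i, Nat.mod_lt _ (hmpos i)⟩ with hΦ
  have hinj : Set.InjOn Φ S := by
    intro f hf g hg hfg
    apply tab_eq_of_code_eq hpos hf hg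
    intro i
    simpa [hΦ, hm] using congrArg Fin.val (congrFun hfg i)
  have hfin : S.Finite := Set.Finite.of_finite_image (Set.toFinite _) hinj
  have hsum : charMN l α = ∑ f ∈ hfin.toFinset, (-1 : ℤ) ^ tabHeight α.length f :=
    finsum_mem_eq_finite_toFinset_sum _ hfin
  have habs : |charMN l α| ≤ (hfin.toFinset.card : ℤ) := by
    rw [hsum]
    calc |∑ f ∈ hfin.toFinset, (-1 : ℤ) ^ tabHeight α.length f|
        ≤ ∑ f ∈ hfin.toFinset, |(-1 : ℤ) ^ tabHeight α.length f| :=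
          Finset.abs_sum_le_sum_abs _ _
      _ = ∑ f ∈ hfin.toFinset, 1 := by
          apply Finset.sum_congr rfl
          intro f _
          rw [abs_pow, abs_neg, abs_one, one_pow]
      _ = (hfin.toFinset.card : ℤ) := by simp
  have hcard : hfin.toFinset.card ≤ ∏ i : Fin α.length, m i := by
    have := Finset.card_le_card_of_injOn Φ
      (s := hfin.toFinset) (t := (Finset.univ : Finset (∀ i : Fin α.length, Fin (m i))))
      (fun a _ => Finset.mem_univ _) ?_
    · rw [Finset.card_univ, Fintype.card_pi] at this
      simpa using this
    · intro a ha b hb hab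
      exact hinj (by simpa using ha) (by simpa using hb) hab
  have hprod : ∏ i : Fin α.length, m i ≤ 2 ^ α.sum * δ ^ α.length := by
    calc ∏ i : Fin α.length, m i
        ≤ ∏ i : Fin α.length, 2 ^ α.get i * δ := by
          apply Finset.prod_le_prod'
          intro i _
          exact factor_le hδ (hpos _ (α.get_mem i))
      _ = (∏ i : Fin α.length, 2 ^ α.get i) * δ ^ α.length := by
          rw [Finset.prod_mul_distrib, Finset.prod_const, Finset.card_univ, Fintype.card_fin]
      _ = 2 ^ (∑ i : Fin α.length, α.get i) * δ ^ α.length := by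
          rw [Finset.prod_pow_eq_pow_sum]
      _ = 2 ^ α.sum * δ ^ α.length := by
          congr 1
          congr 1
          exact Fin.sum_univ_getElem α
  calc |charMN l α| ≤ (hfin.toFinset.card : ℤ) := habs
    _ ≤ ((2 ^ α.sum * δ ^ α.length : ℕ) : ℤ) := by exact_mod_cast le_trans hcard hprod
    _ = (2 : ℤ) ^ α.sum * (δ : ℤ) ^ α.length := by push_cast; ring

end CharBound

/-- character bound via diagonal length and number of cycles
(Theorem 4 of the paper). -/
theorem character_bound_diag_cyc (n : ℕ) (hn : 1 ≤ n) (l : YoungDiagram) (hl : l.card = n)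
    (σ : Equiv.Perm (Fin n)) :
    |(charPerm l σ : ℝ)| ≤ 2 ^ n * (diagLen l : ℝ) ^ cyc σ := by
  set α := (fullCycleType σ).toList with hα
  have hpos : ∀ a ∈ α, 1 ≤ a := by
    intro a ha
    rw [hα, Multiset.mem_toList] at ha
    rcases Multiset.mem_add.mp ha with h | h
    · exact le_of_lt (Equiv.Perm.one_lt_of_mem_cycleType h)
    · rw [Multiset.eq_of_mem_replicate h]
  have hδ : 0 < diagLen l := by
    have hne : l.cells.Nonempty := by
      rw [← Finset.card_pos]
      have : l.cells.card = n := hl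
      omega
    obtain ⟨u, hu⟩ := hne
    have hone : (0, 0) ∈ l :=
      l.up_left_mem (Nat.zero_le _) (Nat.zero_le _) ((YoungDiagram.mem_cells u).mp hu)
    exact Nat.pos_of_ne_zero (fun h0 => by
      have := CharBound.lt_diagLen hone
      omega)
  have hsupp : σ.support.card ≤ n := by
    have := Finset.card_le_univ σ.support
    simpa using this
  have hsum : α.sum = n := by
    rw [hα, Multiset.sum_toList]
    rw [fullCycleType, Multiset.sum_add, Equiv.Perm.sum_cycleType, Multiset.sum_replicate,
      smul_eq_mul, mul_one]
    omega
  have hlen : α.length = cyc σ := by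
    rw [hα, Multiset.length_toList]
    rfl
  have key : |charMN l α| ≤ (2 : ℤ) ^ α.sum * (diagLen l : ℤ) ^ α.length :=
    CharBound.charMN_abs_le hpos hδ
  rw [hsum, hlen] at key
  have hcp : charPerm l σ = charMN l α := rfl
  rw [hcp]
  have : |((charMN l α : ℤ) : ℝ)| = ((|charMN l α| : ℤ) : ℝ) := by
    rw [Int.cast_abs]
  rw [this]
  calc ((|charMN l α| : ℤ) : ℝ) ≤ (((2 : ℤ) ^ n * (diagLen l : ℤ) ^ cyc σ : ℤ) : ℝ) := by
        exact_mod_cast key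
    _ = 2 ^ n * (diagLen l : ℝ) ^ cyc σ := by push_cast; ring

end ThickHookPaper
end

section
/- Let λ be a nonempty Young diagram with n boxes and let a be a real number with s(λ) ≤ a ≤ n. Then there exists an (a, 4a) thick hook decomposition of λ. -/
open scoped BigOperators

namespace ThickHookPaper

lemma diag_mem_iff (l : YoungDiagram) (i : ℕ) : (i, i) ∈ l ↔ i < diagLen l := by
  classical
  set F := l.cells.filter (fun u => u.1 = u.2) with hF
  set S := F.image Prod.fst with hSdef
  have hcard : S.card = F.card := by
    apply Finset.card_image_of_injOn
    intro u hu v hv h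
    simp only [hF, Finset.mem_coe, Finset.mem_filter] at hu hv
    ext
    · exact h
    · rw [← hu.2, ← hv.2]; exact h
  have hmemS : ∀ m : ℕ, m ∈ S ↔ (m, m) ∈ l := by
    intro m
    simp only [hSdef, Finset.mem_image, hF, Finset.mem_filter, YoungDiagram.mem_cells]
    constructor
    · rintro ⟨⟨x, y⟩, ⟨hu, he⟩, rfl⟩
      simp only at he
      subst he
      exact hu
    · intro h; exact ⟨(m, m), ⟨h, rfl⟩, rfl⟩
  have hdc : ∀ m ∈ S, ∀ j ≤ m, j ∈ S := by
    intro m hm j hj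
    rw [hmemS] at hm ⊢
    exact l.up_left_mem hj hj hm
  rw [← hmemS]
  constructor
  · intro h
    have hsub : Finset.range (i + 1) ⊆ S := by
      intro j hj
      exact hdc i h j (Nat.lt_succ_iff.mp (Finset.mem_range.mp hj))
    have := Finset.card_le_card hsub
    simp only [Finset.card_range] at this
    rw [diagLen, ← hF, ← hcard]
    omega
  · intro h
    by_contra hni
    have hsub : S ⊆ Finset.range i := by
      intro m hm
      rw [Finset.mem_range]
      by_contra hge
      exact hni (hdc m hm i (by omega))
    have := Finset.card_le_card hsub
    simp only [Finset.card_range] at this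
    rw [diagLen, ← hF, ← hcard] at h
    omega

lemma min_lt_diagLen (l : YoungDiagram) {u : ℕ × ℕ} (hu : u ∈ l.cells) :
    min u.1 u.2 < diagLen l := by
  rw [← diag_mem_iff]
  exact l.up_left_mem (min_le_left _ _) (min_le_right _ _)
    (by rwa [YoungDiagram.mem_cells] at hu)

/-- The number of boxes of `l` with diagonal index exactly `i`. -/
def gfun (l : YoungDiagram) (i : ℕ) : ℕ :=
  (l.cells.filter (fun u => min u.1 u.2 = i)).card

lemma thick_card (l : YoungDiagram) (lo hi : ℕ) :
    (thickHookCells l lo hi).card = ∑ i ∈ Finset.Ico lo hi, gfun l i := by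
  classical
  have : thickHookCells l lo hi =
      (Finset.Ico lo hi).biUnion (fun i => l.cells.filter (fun u => min u.1 u.2 = i)) := by
    ext u
    simp only [thickHookCells, Finset.mem_filter, Finset.mem_biUnion, Finset.mem_Ico]
    constructor
    · rintro ⟨hu, h1, h2⟩; exact ⟨min u.1 u.2, ⟨h1, h2⟩, hu, rfl⟩
    · rintro ⟨i, hi, hu, rfl⟩; exact ⟨hu, hi.1, hi.2⟩
  rw [this, Finset.card_biUnion]
  · rfl
  · intro i _ j _ hij
    simp only [Finset.disjoint_left, Finset.mem_filter]
    rintro u ⟨_, rfl⟩ ⟨_, h⟩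
    exact hij h

lemma thick_all (l : YoungDiagram) : thickHookCells l 0 (diagLen l) = l.cells := by
  ext u
  simp only [thickHookCells, Finset.mem_filter]
  exact ⟨fun h => h.1, fun h => ⟨h, Nat.zero_le _, min_lt_diagLen l h⟩⟩

lemma gfun_le_maxHook (l : YoungDiagram) (h0 : (0, 0) ∈ l) (i : ℕ) :
    gfun l i ≤ maxHook l := by
  classical
  have hr : 0 < l.rowLen 0 := YoungDiagram.mem_iff_lt_rowLen.mp h0
  have hc : 0 < l.colLen 0 := YoungDiagram.mem_iff_lt_colLen.mp h0
  set B := l.cells.filter (fun u => u.1 = 0 ∨ u.2 = 0) with hB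
  have hmemB : ∀ u : ℕ × ℕ, u ∈ B ↔
      (u.1 = 0 ∧ u.2 < l.rowLen 0) ∨ (u.2 = 0 ∧ u.1 < l.colLen 0) := by
    rintro ⟨x, y⟩
    simp only [hB, Finset.mem_filter, YoungDiagram.mem_cells]
    constructor
    · rintro ⟨hu, h | h⟩
      · subst h; exact Or.inl ⟨rfl, YoungDiagram.mem_iff_lt_rowLen.mp hu⟩
      · subst h; exact Or.inr ⟨rfl, YoungDiagram.mem_iff_lt_colLen.mp hu⟩
    · rintro (⟨h, hlt⟩ | ⟨h, hlt⟩)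
      · subst h; exact ⟨YoungDiagram.mem_iff_lt_rowLen.mpr hlt, Or.inl rfl⟩
      · subst h; exact ⟨YoungDiagram.mem_iff_lt_colLen.mpr hlt, Or.inr rfl⟩
  have hBcard : B.card = maxHook l := by
    set X := (Finset.range (l.rowLen 0)).image (fun j => ((0 : ℕ), j)) with hX
    set Y := (Finset.range (l.colLen 0)).image (fun k => (k, (0 : ℕ))) with hY
    have hXcard : X.card = l.rowLen 0 := by
      rw [hX, Finset.card_image_of_injective _ (fun a b h => by simpa using h),
        Finset.card_range]
    have hYcard : Y.card = l.colLen 0 := by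
      rw [hY, Finset.card_image_of_injective _ (fun a b h => by simpa using h),
        Finset.card_range]
    have hmemX : ∀ u : ℕ × ℕ, u ∈ X ↔ u.1 = 0 ∧ u.2 < l.rowLen 0 := by
      rintro ⟨x, y⟩
      simp only [hX, Finset.mem_image, Finset.mem_range, Prod.mk.injEq]
      constructor
      · rintro ⟨j, hj, h1, h2⟩; exact ⟨h1.symm, h2 ▸ hj⟩
      · rintro ⟨h1, h2⟩; exact ⟨y, h2, h1.symm, rfl⟩
    have hmemY : ∀ u : ℕ × ℕ, u ∈ Y ↔ u.2 = 0 ∧ u.1 < l.colLen 0 := by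
      rintro ⟨x, y⟩
      simp only [hY, Finset.mem_image, Finset.mem_range, Prod.mk.injEq]
      constructor
      · rintro ⟨k, hk, h1, h2⟩; exact ⟨h2.symm, h1 ▸ hk⟩
      · rintro ⟨h1, h2⟩; exact ⟨x, h2, rfl, h1.symm⟩
    have hBXY : B = X ∪ Y := by
      ext u
      rw [hmemB, Finset.mem_union, hmemX, hmemY]
    have hinter : X ∩ Y = {((0 : ℕ), (0 : ℕ))} := by
      ext u
      rw [Finset.mem_inter, hmemX, hmemY, Finset.mem_singleton, Prod.ext_iff]
      constructor
      · rintro ⟨⟨h1, _⟩, h2, _⟩; exact ⟨h1, h2⟩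
      · rintro ⟨h1, h2⟩; exact ⟨⟨h1, h2 ▸ hr⟩, h2, h1 ▸ hc⟩
    have := Finset.card_union_add_card_inter X Y
    rw [← hBXY, hinter, Finset.card_singleton, hXcard, hYcard] at this
    unfold maxHook
    omega
  rw [gfun, ← hBcard]
  apply Finset.card_le_card_of_injOn
    (fun u => if u.1 ≤ u.2 then ((0 : ℕ), u.2 - u.1) else (u.1 - u.2, 0))
  · intro u hu
    simp only [Finset.mem_coe, Finset.mem_filter] at hu ⊢
    by_cases h : u.1 ≤ u.2
    · rw [if_pos h, hmemB]
      left
      refine ⟨rfl, ?_⟩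
      have : ((0 : ℕ), u.2 - u.1) ∈ l :=
        l.up_left_mem (Nat.zero_le _) (Nat.sub_le _ _)
          (by have h1 := hu.1; rwa [YoungDiagram.mem_cells] at h1)
      exact YoungDiagram.mem_iff_lt_rowLen.mp this
    · rw [if_neg h, hmemB]
      right
      refine ⟨rfl, ?_⟩
      have : (u.1 - u.2, (0 : ℕ)) ∈ l :=
        l.up_left_mem (Nat.sub_le _ _) (Nat.zero_le _)
          (by have h1 := hu.1; rwa [YoungDiagram.mem_cells] at h1)
      exact YoungDiagram.mem_iff_lt_colLen.mp this
  · rintro ⟨x, y⟩ hu ⟨z, w⟩ hv h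
    simp only [Finset.mem_coe, Finset.mem_filter] at hu hv
    have hu2 := hu.2
    have hv2 := hv.2
    simp only at hu2 hv2 h
    split_ifs at h with h1 h2 h2 <;>
      simp only [Prod.mk.injEq] at h ⊢ <;> omega

lemma greedy (a : ℝ) (ha : 0 < a) (g : ℕ → ℕ) (hg : ∀ i, (g i : ℝ) ≤ a) :
    ∀ m δ lo, δ - lo ≤ m → lo < δ → a ≤ ∑ i ∈ Finset.Ico lo δ, (g i : ℝ) →
    ∃ p : ℕ, 0 < p ∧ ∃ idx : ℕ → ℕ, idx 0 = lo ∧ idx p = δ ∧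
      (∀ j < p, idx j < idx (j + 1)) ∧
      (∀ j < p, a ≤ ∑ i ∈ Finset.Ico (idx j) (idx (j + 1)), (g i : ℝ)) ∧
      (∀ j < p, ∑ i ∈ Finset.Ico (idx j) (idx (j + 1)), (g i : ℝ) ≤ 4 * a) := by
  intro m
  induction m with
  | zero => intro δ lo h1 h2 _; omega
  | succ m ih =>
    intro δ lo h1 h2 htot
    classical
    by_cases hcase : ∑ i ∈ Finset.Ico lo δ, (g i : ℝ) ≤ 4 * a
    · refine ⟨1, one_pos, fun j => if j = 0 then lo else δ, rfl, by simp, ?_, ?_, ?_⟩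
      · intro j hj; interval_cases j; simpa using h2
      · intro j hj; interval_cases j; simpa using htot
      · intro j hj; interval_cases j; simpa using hcase
    · push_neg at hcase
      have hex : ∃ k, lo < k ∧ k ≤ δ ∧ a ≤ ∑ i ∈ Finset.Ico lo k, (g i : ℝ) :=
        ⟨δ, h2, le_refl _, htot⟩
      obtain ⟨k, hk1, hk2, hk3, hkmin⟩ :
          ∃ k, lo < k ∧ k ≤ δ ∧ (a ≤ ∑ i ∈ Finset.Ico lo k, (g i : ℝ)) ∧
            ∀ m' < k, ¬(lo < m' ∧ m' ≤ δ ∧ a ≤ ∑ i ∈ Finset.Ico lo m', (g i : ℝ)) :=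
        ⟨Nat.find hex, (Nat.find_spec hex).1, (Nat.find_spec hex).2.1,
          (Nat.find_spec hex).2.2, fun m' hm' => Nat.find_min hex hm'⟩
      have hchunk : ∑ i ∈ Finset.Ico lo k, (g i : ℝ) ≤ 2 * a := by
        rcases Nat.lt_or_ge (lo + 1) k with h | h
        · have hmin := hkmin (k - 1) (by omega)
          push_neg at hmin
          have hlt : ∑ i ∈ Finset.Ico lo (k - 1), (g i : ℝ) < a :=
            hmin (by omega) (by omega)
          have hsum : ∑ i ∈ Finset.Ico lo (k - 1 + 1), (g i : ℝ)
              = ∑ i ∈ Finset.Ico lo (k - 1), (g i : ℝ) + (g (k - 1) : ℝ) :=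
            Finset.sum_Ico_succ_top (by omega) _
          rw [show k - 1 + 1 = k by omega] at hsum
          rw [hsum]
          have := hg (k - 1)
          linarith
        · have hkk : k = lo + 1 := by omega
          rw [hkk]
          have hsum : ∑ i ∈ Finset.Ico lo (lo + 1), (g i : ℝ)
              = ∑ i ∈ Finset.Ico lo lo, (g i : ℝ) + (g lo : ℝ) :=
            Finset.sum_Ico_succ_top (le_refl _) _
          rw [hsum, Finset.Ico_self, Finset.sum_empty]
          have := hg lo
          linarith
      have hsplit : ∑ i ∈ Finset.Ico lo k, (g i : ℝ) + ∑ i ∈ Finset.Ico k δ, (g i : ℝ)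
          = ∑ i ∈ Finset.Ico lo δ, (g i : ℝ) :=
        Finset.sum_Ico_consecutive _ (le_of_lt hk1) hk2
      have hrest : a ≤ ∑ i ∈ Finset.Ico k δ, (g i : ℝ) := by linarith
      have hkδ : k < δ := by
        rcases eq_or_lt_of_le hk2 with heq | h
        · exfalso
          rw [heq] at hrest
          rw [Finset.Ico_self, Finset.sum_empty] at hrest
          linarith
        · exact h
      obtain ⟨p', hp', idx', h0', hl', hm', hlb', hub'⟩ :=
        ih δ k (by omega) hkδ hrest
      refine ⟨p' + 1, Nat.succ_pos _, fun j => if j = 0 then lo else idx' (j - 1),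
        rfl, by simp [hl'], ?_, ?_, ?_⟩
      · intro j hj
        rcases Nat.eq_zero_or_pos j with rfl | hjpos
        · show lo < idx' 0
          rw [h0']; exact hk1
        · have hne : j ≠ 0 := by omega
          have hne2 : j + 1 ≠ 0 := by omega
          simp only [if_neg hne, if_neg hne2, Nat.add_sub_cancel]
          have := hm' (j - 1) (by omega)
          rwa [show j - 1 + 1 = j by omega] at this
      · intro j hj
        rcases Nat.eq_zero_or_pos j with rfl | hjpos
        · show a ≤ ∑ i ∈ Finset.Ico lo (idx' 0), (g i : ℝ)
          rw [h0']; exact hk3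
        · have hne : j ≠ 0 := by omega
          have hne2 : j + 1 ≠ 0 := by omega
          simp only [if_neg hne, if_neg hne2, Nat.add_sub_cancel]
          have := hlb' (j - 1) (by omega)
          rwa [show j - 1 + 1 = j by omega] at this
      · intro j hj
        rcases Nat.eq_zero_or_pos j with rfl | hjpos
        · show ∑ i ∈ Finset.Ico lo (idx' 0), (g i : ℝ) ≤ 4 * a
          rw [h0']; linarith
        · have hne : j ≠ 0 := by omega
          have hne2 : j + 1 ≠ 0 := by omega
          simp only [if_neg hne, if_neg hne2, Nat.add_sub_cancel]
          have := hub' (j - 1) (by omega)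
          rwa [show j - 1 + 1 = j by omega] at this

/-- existence of `(a, 4a)` thick hook decompositions. -/
theorem thick_hook_decomp_exists (l : YoungDiagram) (hl : 1 ≤ l.card) (a : ℝ)
    (ha1 : (maxHook l : ℝ) ≤ a) (ha2 : a ≤ (l.card : ℝ)) :
    Nonempty (ThickHookDecomp l a (4 * a)) := by
  classical
  have hne : l.cells.Nonempty := Finset.card_pos.mp hl
  have h00 : (0, 0) ∈ l := by
    obtain ⟨u, hu⟩ := hne
    exact l.up_left_mem (Nat.zero_le _) (Nat.zero_le _)
      (by rwa [YoungDiagram.mem_cells] at hu)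
  have hδ : 0 < diagLen l := (diag_mem_iff l 0).mp h00
  have hmax1 : 1 ≤ maxHook l := by
    have h1 : 0 < l.rowLen 0 := YoungDiagram.mem_iff_lt_rowLen.mp h00
    have h2 : 0 < l.colLen 0 := YoungDiagram.mem_iff_lt_colLen.mp h00
    unfold maxHook; omega
  have ha0 : 0 < a := by
    have : (1 : ℝ) ≤ (maxHook l : ℝ) := by exact_mod_cast hmax1
    linarith
  have htotn : ∑ i ∈ Finset.Ico 0 (diagLen l), gfun l i = l.card := by
    rw [← thick_card l 0 (diagLen l), thick_all]
  have htot : a ≤ ∑ i ∈ Finset.Ico 0 (diagLen l), (gfun l i : ℝ) := by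
    have : ((l.card : ℕ) : ℝ) = ∑ i ∈ Finset.Ico 0 (diagLen l), (gfun l i : ℝ) := by
      rw [← htotn]
      push_cast
      rfl
    linarith
  have hg : ∀ i, (gfun l i : ℝ) ≤ a := by
    intro i
    have := gfun_le_maxHook l h00 i
    have : (gfun l i : ℝ) ≤ (maxHook l : ℝ) := by exact_mod_cast this
    linarith
  obtain ⟨p, hp, idx, h0, hlast, hmono, hlb, hub⟩ :=
    greedy a ha0 (gfun l) hg (diagLen l) (diagLen l) 0 (by omega) hδ htot
  refine ⟨⟨p, hp, idx, h0, hlast, hmono, ?_, ?_⟩⟩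
  · intro j hj
    have := hlb j hj
    rw [thick_card]
    push_cast
    exact this
  · intro j hj
    have := hub j hj
    rw [thick_card]
    push_cast
    exact this

end ThickHookPaper
end

section
/- Let λ be a Young diagram with n boxes, let a be a real number with s(λ) ≤ a ≤ n, and let 1 ≤ ℓ ≤ λ_1 be an integer. Then the excited sum satisfies S(λ, [ℓ]) ≤ C(ℓ + ⌊n/a⌋, ℓ) · (4a)^ℓ, where C(·,·) denotes a binomial coefficient. -/
open scoped BigOperators

namespace ThickHookPaper

/-! ### Auxiliary lemmas for the proof of `excited_sum_row_general` -/

section Aux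

lemma aux_hook_le_diag (l : YoungDiagram) (d k : ℕ) : hook l (d, d + k) ≤ hook l (d, d) := by
  have h1 : l.colLen (d + k) ≤ l.colLen d := l.colLen_anti _ _ (Nat.le_add_right _ _)
  unfold hook; dsimp only; omega

lemma aux_hook_diag_le_maxHook (l : YoungDiagram) (d : ℕ) : hook l (d, d) ≤ maxHook l := by
  have h1 : l.rowLen d ≤ l.rowLen 0 := l.rowLen_anti _ _ (Nat.zero_le _)
  have h2 : l.colLen d ≤ l.colLen 0 := l.colLen_anti _ _ (Nat.zero_le _)
  unfold hook maxHook; dsimp only; omega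

/-- the hook cells of the diagonal box `(d,d)` -/
def auxHookFin (l : YoungDiagram) (d : ℕ) : Finset (ℕ × ℕ) :=
  ({d} ×ˢ Finset.Ico d (l.rowLen d)) ∪ ((Finset.Ico (d+1) (l.colLen d)) ×ˢ {d})

lemma auxHookFin_subset (l : YoungDiagram) (d : ℕ) : auxHookFin l d ⊆ l.cells := by
  intro u hu
  simp only [auxHookFin, Finset.mem_union, Finset.mem_product, Finset.mem_Ico,
    Finset.mem_singleton] at hu
  rw [YoungDiagram.mem_cells]
  rcases hu with ⟨h1, h2⟩ | ⟨h1, h2⟩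
  · rw [YoungDiagram.mem_iff_lt_rowLen, h1]; exact h2.2
  · rw [YoungDiagram.mem_iff_lt_colLen, h2]; exact h1.2

lemma aux_min_eq_of_mem_hookFin (l : YoungDiagram) (d : ℕ) (u : ℕ × ℕ)
    (hu : u ∈ auxHookFin l d) : min u.1 u.2 = d := by
  simp only [auxHookFin, Finset.mem_union, Finset.mem_product, Finset.mem_Ico,
    Finset.mem_singleton] at hu
  rcases hu with ⟨h1, h2⟩ | ⟨h1, h2⟩ <;> omega

lemma aux_hook_diag_le_card_hookFin (l : YoungDiagram) (d : ℕ) :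
    hook l (d, d) ≤ (auxHookFin l d).card := by
  have hdisj : Disjoint ({d} ×ˢ Finset.Ico d (l.rowLen d))
      ((Finset.Ico (d+1) (l.colLen d)) ×ˢ ({d} : Finset ℕ)) := by
    rw [Finset.disjoint_left]
    rintro ⟨i, j⟩ h1 h2
    simp only [Finset.mem_product, Finset.mem_Ico, Finset.mem_singleton] at h1 h2
    omega
  rw [auxHookFin, Finset.card_union_of_disjoint hdisj, Finset.card_product,
    Finset.card_product]
  simp only [Finset.card_singleton, Nat.card_Ico, one_mul, mul_one]
  unfold hook; dsimp only; omega

lemma aux_sum_hook_diag_le_card (l : YoungDiagram) (D : ℕ) :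
    ∑ d ∈ Finset.range D, hook l (d, d) ≤ l.card := by
  classical
  calc ∑ d ∈ Finset.range D, hook l (d, d) ≤ ∑ d ∈ Finset.range D, (auxHookFin l d).card :=
        Finset.sum_le_sum fun d _ => aux_hook_diag_le_card_hookFin l d
    _ = ((Finset.range D).biUnion (auxHookFin l)).card := by
        rw [Finset.card_biUnion]
        intro x _ y _ hxy
        rw [Function.onFun, Finset.disjoint_left]
        intro u hx hy
        exact hxy ((aux_min_eq_of_mem_hookFin l x u hx).symm.trans
          (aux_min_eq_of_mem_hookFin l y u hy))
    _ ≤ l.cells.card := Finset.card_le_card (by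
        intro u hu
        rw [Finset.mem_biUnion] at hu
        obtain ⟨d, _, hd⟩ := hu
        exact auxHookFin_subset l d hd)
    _ = l.card := rfl

lemma aux_hook_eq_zero_of_not_mem (l : YoungDiagram) (u : ℕ × ℕ) (h : u ∉ l) :
    hook l u = 0 := by
  obtain ⟨i, j⟩ := u
  have h1 : ¬ j < l.rowLen i := fun hc => h (YoungDiagram.mem_iff_lt_rowLen.2 hc)
  have h2 : ¬ i < l.colLen j := fun hc => h (YoungDiagram.mem_iff_lt_colLen.2 hc)
  unfold hook; dsimp only; omega

/-- The structural invariant preserved by excitation starting from a row. -/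
def RowState (l : YoungDiagram) (ℓ : ℕ) (E : Finset (ℕ × ℕ)) : Prop :=
  ∃ d : ℕ → ℕ, (∀ j k, j ≤ k → k < ℓ → d j ≤ d k) ∧ (∀ k < ℓ, (d k, d k + k) ∈ l) ∧
    E = (Finset.range ℓ).image (fun k => (d k, d k + k))

lemma rowState_init (l : YoungDiagram) (ℓ : ℕ) (h2 : ℓ ≤ l.rowLen 0) :
    RowState l ℓ (rowDiagram ℓ).cells := by
  refine ⟨fun _ => 0, fun _ _ _ _ => le_rfl, fun k hk => ?_, ?_⟩
  · exact YoungDiagram.mem_iff_lt_rowLen.2 (show 0 + k < l.rowLen 0 by omega)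
  · ext ⟨i, j⟩
    simp only [rowDiagram, rect, YoungDiagram.mem_cells, YoungDiagram.mem_mk,
      Finset.mem_product, Finset.mem_range, Finset.mem_image, Prod.mk.injEq]
    constructor
    · rintro ⟨hi, hj⟩; exact ⟨j, hj, by omega, by omega⟩
    · rintro ⟨k, hk, hi, hj⟩; omega

lemma rowState_step (l : YoungDiagram) (ℓ : ℕ) (E E' : Finset (ℕ × ℕ))
    (hstep : ExciteStep l E E') (hE : RowState l ℓ E) : RowState l ℓ E' := by
  obtain ⟨d, hmono, hmem, hEeq⟩ := hE
  obtain ⟨u, huE, hurs, hint, hE'⟩ := hstep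
  have ginj : ∀ m m' : ℕ, (d m, d m + m) = (d m', d m' + m') → m = m' := by
    intro m m' h; injection h with h1 h2; omega
  rw [hEeq, Finset.mem_image] at huE
  obtain ⟨k, hk, hu⟩ := huE
  rw [Finset.mem_range] at hk
  have hkey : k + 1 < ℓ → d k + 1 ≤ d (k + 1) := by
    intro hk1
    have hge : d k ≤ d (k + 1) := hmono k (k+1) (by omega) hk1
    rcases Nat.eq_or_lt_of_le hge with heq | hlt
    · exfalso
      have hmem2 : (d (k+1), d (k+1) + (k+1)) ∈ E ∩ URS u := by
        rw [Finset.mem_inter]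
        refine ⟨by rw [hEeq, Finset.mem_image]; exact ⟨k+1, Finset.mem_range.2 hk1, rfl⟩, ?_⟩
        rw [← hu]
        simp only [URS, Finset.mem_insert, Finset.mem_singleton, Prod.mk.injEq]
        right; right; left; omega
      rw [hint, Finset.mem_singleton, ← hu] at hmem2
      injection hmem2 with ha hb; omega
    · exact hlt
  set d' : ℕ → ℕ := fun j => if j = k then d k + 1 else d j with hd'
  have hd'k : d' k = d k + 1 := by simp [hd']
  have hd'ne : ∀ j, j ≠ k → d' j = d j := by intro j hj; simp [hd', hj]
  refine ⟨d', ?_, ?_, ?_⟩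
  · intro i j hij hj
    by_cases hik : i = k
    · by_cases hjk : j = k
      · subst hik; subst hjk; exact le_rfl
      · rw [hd'ne j hjk]
        subst hik
        have h1 : i + 1 ≤ j := by omega
        have h2 : d (i+1) ≤ d j := hmono (i+1) j h1 hj
        have h3 : d i + 1 ≤ d (i+1) := hkey (by omega)
        omega
    · rw [hd'ne i hik]
      by_cases hjk : j = k
      · subst hjk
        have := hmono i j hij hj
        omega
      · rw [hd'ne j hjk]; exact hmono i j hij hj
  · intro j hj
    by_cases hjk : j = k
    · subst hjk
      rw [hd'k]
      have hl : (u.1 + 1, u.2 + 1) ∈ l.cells := hurs (by simp [URS])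
      rw [YoungDiagram.mem_cells] at hl
      rw [← hu] at hl
      have : (d j + 1, d j + 1 + j) = (d j + 1, d j + j + 1) := by
        rw [Prod.mk.injEq]; omega
      rw [this]; exact hl
    · rw [hd'ne j hjk]; exact hmem j hj
  · rw [hE']
    ext x
    simp only [Finset.mem_insert, Finset.mem_erase, hEeq, Finset.mem_image, Finset.mem_range]
    constructor
    · rintro (h | ⟨hne, m, hm, hmm⟩)
      · refine ⟨k, hk, ?_⟩
        rw [h, ← hu, hd'k, Prod.mk.injEq]; omega
      · have hmk : m ≠ k := fun hc => hne (by rw [← hmm, hc, hu])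
        exact ⟨m, hm, by rw [hd'ne m hmk]; exact hmm⟩
    · rintro ⟨m, hm, hmm⟩
      by_cases hmk : m = k
      · subst hmk
        rw [hd'k] at hmm
        left; rw [← hmm, ← hu, Prod.mk.injEq]; omega
      · rw [hd'ne m hmk] at hmm
        right
        refine ⟨?_, m, hm, hmm⟩
        intro hc
        rw [hc, ← hu] at hmm
        exact hmk (ginj m k hmm)

lemma excited_rowState (l : YoungDiagram) (ℓ : ℕ) (h2 : ℓ ≤ l.rowLen 0) :
    ∀ E ∈ Excited l (rowDiagram ℓ), RowState l ℓ E := by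
  intro E hE
  induction hE with
  | refl => exact rowState_init l ℓ h2
  | tail _ hstep ih => exact rowState_step l ℓ _ _ hstep ih

/-- canonical extraction of the row indices of an excited row diagram -/
noncomputable def dOf (E : Finset (ℕ × ℕ)) (k : ℕ) : ℕ := sInf {i | (i, i + k) ∈ E}

lemma rowState_spec {l : YoungDiagram} {ℓ : ℕ} {E : Finset (ℕ × ℕ)} (h : RowState l ℓ E) :
    (∀ j k, j ≤ k → k < ℓ → dOf E j ≤ dOf E k) ∧ (∀ k < ℓ, (dOf E k, dOf E k + k) ∈ l) ∧
    E = (Finset.range ℓ).image (fun k => (dOf E k, dOf E k + k)) := by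
  obtain ⟨d, h1, h2, h3⟩ := h
  have hd : ∀ k, k < ℓ → dOf E k = d k := by
    intro k hk
    have hset : {i | (i, i + k) ∈ E} = {d k} := by
      ext i
      simp only [Set.mem_setOf_eq, Set.mem_singleton_iff, h3, Finset.mem_image,
        Finset.mem_range]
      constructor
      · rintro ⟨m, hm, hmm⟩
        injection hmm with p q
        have hmk : m = k := by omega
        subst hmk; omega
      · rintro rfl; exact ⟨k, hk, rfl⟩
    rw [dOf, hset, csInf_singleton]
  refine ⟨fun j k hjk hk => ?_, fun k hk => ?_, ?_⟩
  · rw [hd j (by omega), hd k hk]; exact h1 j k hjk hk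
  · rw [hd k hk]; exact h2 k hk
  · conv_lhs => rw [h3]
    apply Finset.image_congr
    intro k hk
    rw [Finset.mem_coe, Finset.mem_range] at hk
    show (d k, d k + k) = (dOf E k, dOf E k + k)
    rw [hd k hk]

open scoped Classical in
/-- monotone sequences of length `ℓ` with values `< D` -/
noncomputable def monoFinset (ℓ D : ℕ) : Finset (Fin ℓ → ℕ) :=
  (Fintype.piFinset fun _ : Fin ℓ => Finset.range D).filter (fun c => Monotone c)

lemma mem_monoFinset {ℓ D : ℕ} {c : Fin ℓ → ℕ} :
    c ∈ monoFinset ℓ D ↔ (∀ k, c k < D) ∧ Monotone c := by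
  classical
  simp [monoFinset, Fintype.mem_piFinset]

lemma card_monoFinset_le (ℓ m : ℕ) :
    (monoFinset ℓ (m + 1)).card ≤ (ℓ + m).choose ℓ := by
  classical
  have key : ∀ c ∈ monoFinset ℓ (m+1),
      (Finset.image (fun k : Fin ℓ => c k + (k : ℕ)) Finset.univ) ∈
        Finset.powersetCard ℓ (Finset.range (ℓ + m)) := by
    intro c hc
    rw [mem_monoFinset] at hc
    rw [Finset.mem_powersetCard]
    constructor
    · intro x hx
      rw [Finset.mem_image] at hx
      obtain ⟨k, _, hk⟩ := hx
      rw [Finset.mem_range]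
      have := hc.1 k
      have := k.isLt
      omega
    · rw [Finset.card_image_of_injective _ ?_, Finset.card_univ, Fintype.card_fin]
      intro x y hxy
      have hxy' : c x + (x : ℕ) = c y + (y : ℕ) := hxy
      by_contra hne
      rcases Ne.lt_or_gt hne with h | h
      · have h1 := hc.2 h.le
        have h2 : (x : ℕ) < y := h
        omega
      · have h1 := hc.2 h.le
        have h2 : (y : ℕ) < x := h
        omega
  have hsm : ∀ c ∈ monoFinset ℓ (m+1), StrictMono (fun k : Fin ℓ => c k + (k : ℕ)) := by
    intro c hc x y hxy
    show c x + (x : ℕ) < c y + (y : ℕ)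
    have h1 := (mem_monoFinset.1 hc).2 hxy.le
    have h2 : (x : ℕ) < y := hxy
    omega
  calc (monoFinset ℓ (m+1)).card
      ≤ (Finset.powersetCard ℓ (Finset.range (ℓ + m))).card := by
        apply Finset.card_le_card_of_injOn _ key
        intro c hc c' hc' himg
        replace hc := Finset.mem_coe.1 hc
        replace hc' := Finset.mem_coe.1 hc'
        dsimp only at himg
        have hcard : (Finset.image (fun k : Fin ℓ => c k + (k : ℕ)) Finset.univ).card = ℓ :=
          (Finset.mem_powersetCard.1 (key c hc)).2
        have hcard' : (Finset.image (fun k : Fin ℓ => c' k + (k : ℕ)) Finset.univ).card = ℓ :=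
          (Finset.mem_powersetCard.1 (key c' hc')).2
        have e1 := Finset.orderEmbOfFin_unique hcard'
          (f := fun k : Fin ℓ => c k + (k : ℕ))
          (fun x => himg ▸ Finset.mem_image_of_mem _ (Finset.mem_univ x)) (hsm c hc)
        have e2 := Finset.orderEmbOfFin_unique hcard'
          (f := fun k : Fin ℓ => c' k + (k : ℕ))
          (fun x => Finset.mem_image_of_mem _ (Finset.mem_univ x)) (hsm c' hc')
        have : (fun k : Fin ℓ => c k + (k : ℕ)) = fun k : Fin ℓ => c' k + (k : ℕ) :=
          e1.trans e2.symm
        funext k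
        exact Nat.add_right_cancel (congrFun this k)
    _ = (ℓ + m).choose ℓ := by
        rw [Finset.card_powersetCard, Finset.card_range]

lemma block_sum_le (g : ℕ → ℕ) (A : ℕ) (hA : 1 ≤ A) (hg : ∀ d, g d ≤ A) (D j : ℕ) :
    ∑ d ∈ (Finset.range D).filter
        (fun d => (∑ e ∈ Finset.range d, g e) / A = j), g d ≤ 2 * A - 1 := by
  classical
  set G : ℕ → ℕ := fun d => ∑ e ∈ Finset.range d, g e with hG
  set T := (Finset.range D).filter (fun d => G d / A = j) with hT
  rcases T.eq_empty_or_nonempty with he | hne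
  · rw [he]; simp
  · set M := T.max' hne with hM
    set m0 := T.min' hne with hm0
    have hMT : M ∈ T := T.max'_mem hne
    have hm0T : m0 ∈ T := T.min'_mem hne
    have hMj : G M / A = j := (Finset.mem_filter.1 hMT).2
    have hm0j : G m0 / A = j := (Finset.mem_filter.1 hm0T).2
    have hsub : T ⊆ Finset.Ico m0 (M + 1) := by
      intro t ht
      rw [Finset.mem_Ico]
      exact ⟨T.min'_le t ht, Nat.lt_succ_of_le (T.le_max' t ht)⟩
    have h1 : ∑ d ∈ T, g d ≤ ∑ d ∈ Finset.Ico m0 (M + 1), g d :=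
      Finset.sum_le_sum_of_subset hsub
    have h2 : G m0 + ∑ d ∈ Finset.Ico m0 (M + 1), g d = G (M + 1) := by
      rw [hG]
      dsimp only
      rw [Finset.range_eq_Ico, Finset.range_eq_Ico]
      exact Finset.sum_Ico_consecutive g (Nat.zero_le _) (by
        have : m0 ≤ M := T.min'_le M hMT
        omega)
    have h3 : G (M + 1) = G M + g M := Finset.sum_range_succ g M
    have h4 : j * A ≤ G m0 := (Nat.le_div_iff_mul_le (by omega)).1 (le_of_eq hm0j.symm)
    have h5 : G M < (j + 1) * A := by
      have := (Nat.div_lt_iff_lt_mul (show 0 < A by omega)).1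
        (show G M / A < j + 1 by omega)
      omega
    have h6 : g M ≤ A := hg M
    have h7 : (j + 1) * A = j * A + A := by ring
    omega

end Aux

/-- general bound on the excited sum of a row via thick hook decompositions
(Proposition `borne générale` of the paper). -/
theorem excited_sum_row_general (l : YoungDiagram) (a : ℝ)
    (ha1 : (maxHook l : ℝ) ≤ a) (ha2 : a ≤ (l.card : ℝ))
    (ℓ : ℕ) (h1 : 1 ≤ ℓ) (h2 : ℓ ≤ l.rowLen 0) :
    (excitedSum l (rowDiagram ℓ) : ℝ) ≤
      ((ℓ + ⌊(l.card : ℝ) / a⌋₊).choose ℓ : ℝ) * (4 * a) ^ ℓ := by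
  classical
  set n := l.card with hn
  set m := ⌊(n : ℝ) / a⌋₊ with hm
  set A := ⌈a⌉₊ with hABlock
  set D := l.colLen 0 with hDdef
  have hl00 : (0, 0) ∈ l := YoungDiagram.mem_iff_lt_rowLen.2 (by omega)
  have hD1 : 1 ≤ D := by
    have := YoungDiagram.mem_iff_lt_colLen.1 hl00
    omega
  have hs1 : 1 ≤ maxHook l := by
    have hc := YoungDiagram.mem_iff_lt_colLen.1 hl00
    unfold maxHook
    omega
  have ha_1 : (1 : ℝ) ≤ a := le_trans (by exact_mod_cast hs1) ha1
  have hA1 : 1 ≤ A := Nat.one_le_ceil_iff.2 (by linarith)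
  have hsA : maxHook l ≤ A := by
    have h1 : (maxHook l : ℝ) ≤ (A : ℝ) := le_trans ha1 (Nat.le_ceil a)
    exact_mod_cast h1
  have hgA : ∀ d, hook l (d, d) ≤ A := fun d =>
    le_trans (aux_hook_diag_le_maxHook l d) hsA
  have hdivm : ∀ i, (∑ e ∈ Finset.range i, hook l (e, e)) / A ≤ m := by
    intro i
    have h1 : (∑ e ∈ Finset.range i, hook l (e, e)) / A ≤ n / A :=
      Nat.div_le_div_right (aux_sum_hook_diag_le_card l i)
    have h2 : n / A ≤ m := by
      apply Nat.le_floor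
      calc ((n / A : ℕ) : ℝ) ≤ (n : ℝ) / (A : ℝ) := Nat.cast_div_le
        _ ≤ (n : ℝ) / a :=
            div_le_div_of_nonneg_left (by positivity) (by linarith) (Nat.le_ceil a)
    omega
  have hP := excited_rowState l ℓ h2
  have hfin : (Excited l (rowDiagram ℓ)).Finite := by
    apply Set.Finite.subset l.cells.powerset.finite_toSet
    intro E hE
    obtain ⟨-, hmem, hEeq⟩ := rowState_spec (hP E hE)
    rw [Finset.mem_coe, Finset.mem_powerset]
    intro u hu
    rw [hEeq, Finset.mem_image] at hu
    obtain ⟨k, hk, hkk⟩ := hu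
    rw [Finset.mem_range] at hk
    rw [YoungDiagram.mem_cells]
    exact hkk ▸ hmem k hk
  -- notations
  set w : (Fin ℓ → ℕ) → ℕ := fun f => ∏ k : Fin ℓ, hook l (f k, f k + (k : ℕ)) with hw
  set φ : Finset (ℕ × ℕ) → (Fin ℓ → ℕ) := fun E k => dOf E (k : ℕ) with hφ
  have hS : excitedSum l (rowDiagram ℓ) = ∑ E ∈ hfin.toFinset, ∏ u ∈ E, hook l u := by
    rw [excitedSum]
    exact finsum_mem_eq_finite_toFinset_sum _ hfin
  have hwφ : ∀ E ∈ hfin.toFinset, (∏ u ∈ E, hook l u) = w (φ E) := by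
    intro E hE
    rw [Set.Finite.mem_toFinset] at hE
    obtain ⟨-, -, hEeq⟩ := rowState_spec (hP E hE)
    conv_lhs => rw [hEeq]
    rw [Finset.prod_image]
    · rw [hw]
      dsimp only
      rw [← Fin.prod_univ_eq_prod_range (fun k => hook l (dOf E k, dOf E k + k)) ℓ]
    · intro x _ y _ hxy
      injection hxy with p q
      omega
  have hinj : ∀ E ∈ hfin.toFinset, ∀ E' ∈ hfin.toFinset, φ E = φ E' → E = E' := by
    intro E hE E' hE' hφE
    rw [Set.Finite.mem_toFinset] at hE hE'
    obtain ⟨-, -, hEeq⟩ := rowState_spec (hP E hE)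
    obtain ⟨-, -, hE'eq⟩ := rowState_spec (hP E' hE')
    rw [hEeq, hE'eq]
    apply Finset.image_congr
    intro k hk
    rw [Finset.mem_coe, Finset.mem_range] at hk
    have hcf := congrFun hφE (⟨k, hk⟩ : Fin ℓ)
    have hcf' : dOf E k = dOf E' k := hcf
    show (dOf E k, dOf E k + k) = (dOf E' k, dOf E' k + k)
    rw [hcf']
  have hsub : hfin.toFinset.image φ ⊆ monoFinset ℓ D := by
    intro f hf
    rw [Finset.mem_image] at hf
    obtain ⟨E, hE, rfl⟩ := hf
    rw [Set.Finite.mem_toFinset] at hE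
    obtain ⟨hmono, hmem, -⟩ := rowState_spec (hP E hE)
    rw [mem_monoFinset]
    constructor
    · intro k
      have hbox := hmem (k : ℕ) k.isLt
      have h1 : dOf E (k : ℕ) < l.colLen (dOf E (k : ℕ) + (k : ℕ)) :=
        YoungDiagram.mem_iff_lt_colLen.1 hbox
      have h2 : l.colLen (dOf E (k : ℕ) + (k : ℕ)) ≤ l.colLen 0 :=
        l.colLen_anti _ _ (Nat.zero_le _)
      show dOf E (k : ℕ) < D
      omega
    · intro x y hxy
      exact hmono (x : ℕ) (y : ℕ) hxy y.isLt
  -- the natural-number bound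
  have hkeybound : excitedSum l (rowDiagram ℓ) ≤ (ℓ + m).choose ℓ * (2 * A - 1) ^ ℓ := by
    rw [hS, Finset.sum_congr rfl hwφ, ← Finset.sum_image hinj]
    have step1 : ∑ f ∈ hfin.toFinset.image φ, w f ≤ ∑ f ∈ monoFinset ℓ D, w f :=
      Finset.sum_le_sum_of_subset hsub
    set β : (Fin ℓ → ℕ) → (Fin ℓ → ℕ) :=
      fun f k => (∑ e ∈ Finset.range (f k), hook l (e, e)) / A with hβ
    have hmaps : ∀ f ∈ monoFinset ℓ D, β f ∈ monoFinset ℓ (m + 1) := by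
      intro f hf
      rw [mem_monoFinset] at hf ⊢
      constructor
      · intro k
        show (∑ e ∈ Finset.range (f k), hook l (e, e)) / A < m + 1
        have := hdivm (f k)
        omega
      · intro x y hxy
        apply Nat.div_le_div_right
        apply Finset.sum_le_sum_of_subset
        exact Finset.range_subset_range.2 (hf.2 hxy)
    have step2 : ∑ f ∈ monoFinset ℓ D, w f =
        ∑ c ∈ monoFinset ℓ (m + 1), ∑ f ∈ (monoFinset ℓ D).filter (fun f => β f = c), w f :=
      (Finset.sum_fiberwise_of_maps_to hmaps w).symm
    have step3 : ∀ c ∈ monoFinset ℓ (m + 1),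
        ∑ f ∈ (monoFinset ℓ D).filter (fun f => β f = c), w f ≤ (2 * A - 1) ^ ℓ := by
      intro c _
      set T : Fin ℓ → Finset ℕ := fun k =>
        (Finset.range D).filter
          (fun d => (∑ e ∈ Finset.range d, hook l (e, e)) / A = c k) with hT
      have hsub2 : (monoFinset ℓ D).filter (fun f => β f = c) ⊆ Fintype.piFinset T := by
        intro f hf
        rw [Finset.mem_filter] at hf
        rw [Fintype.mem_piFinset]
        intro k
        rw [hT]
        dsimp only
        rw [Finset.mem_filter, Finset.mem_range]
        exact ⟨(mem_monoFinset.1 hf.1).1 k, congrFun hf.2 k⟩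
      calc ∑ f ∈ (monoFinset ℓ D).filter (fun f => β f = c), w f
          ≤ ∑ f ∈ Fintype.piFinset T, w f := Finset.sum_le_sum_of_subset hsub2
        _ = ∏ k : Fin ℓ, ∑ d ∈ T k, hook l (d, d + (k : ℕ)) :=
            (Finset.prod_univ_sum T (fun k d => hook l (d, d + (k : ℕ)))).symm
        _ ≤ ∏ _k : Fin ℓ, (2 * A - 1) := by
            apply Finset.prod_le_prod'
            intro k _
            calc ∑ d ∈ T k, hook l (d, d + (k : ℕ))
                ≤ ∑ d ∈ T k, hook l (d, d) :=
                  Finset.sum_le_sum (fun d _ => aux_hook_le_diag l d k)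
              _ ≤ 2 * A - 1 := block_sum_le (fun e => hook l (e, e)) A hA1 hgA D (c k)
        _ = (2 * A - 1) ^ ℓ := by
            rw [Finset.prod_const, Finset.card_univ, Fintype.card_fin]
    calc ∑ f ∈ hfin.toFinset.image φ, w f
        ≤ ∑ f ∈ monoFinset ℓ D, w f := step1
      _ = _ := step2
      _ ≤ ∑ _c ∈ monoFinset ℓ (m + 1), (2 * A - 1) ^ ℓ := Finset.sum_le_sum step3
      _ = (monoFinset ℓ (m + 1)).card * (2 * A - 1) ^ ℓ := by
          rw [Finset.sum_const, smul_eq_mul]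
      _ ≤ (ℓ + m).choose ℓ * (2 * A - 1) ^ ℓ :=
          Nat.mul_le_mul_right _ (card_monoFinset_le ℓ m)
  -- pass to the reals
  have hcast : ((2 * A - 1 : ℕ) : ℝ) ≤ 4 * a := by
    have h1 : (A : ℝ) < a + 1 := Nat.ceil_lt_add_one (by linarith)
    have h2 : ((2 * A - 1 : ℕ) : ℝ) = 2 * (A : ℝ) - 1 := by
      have : (1 : ℕ) ≤ 2 * A := by omega
      push_cast [Nat.cast_sub this]
      ring
    rw [h2]
    linarith
  calc (excitedSum l (rowDiagram ℓ) : ℝ)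
      ≤ (((ℓ + m).choose ℓ * (2 * A - 1) ^ ℓ : ℕ) : ℝ) := by exact_mod_cast hkeybound
    _ = ((ℓ + m).choose ℓ : ℝ) * ((2 * A - 1 : ℕ) : ℝ) ^ ℓ := by push_cast; ring
    _ ≤ ((ℓ + m).choose ℓ : ℝ) * (4 * a) ^ ℓ := by
        apply mul_le_mul_of_nonneg_left _ (by positivity)
        exact pow_le_pow_left₀ (by positivity) hcast ℓ

end ThickHookPaper
end

section
/- Let λ be a Young diagram with n boxes and maximal hook length s = s(λ), and let 1 ≤ ℓ ≤ λ_1 be an integer with ℓ ≤ n/s. Then the excited sum satisfies S(λ, [ℓ]) ≤ (8n/ℓ)^ℓ. -/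
open scoped BigOperators

namespace ThickHookPaper

section AuxLemmas
open Finset

lemma hook_le_diag (l : YoungDiagram) {i j : ℕ} (hij : i ≤ j) :
    hook l (i, j) ≤ hook l (i, i) := by
  have h1 : l.rowLen i - j ≤ l.rowLen i - i := Nat.sub_le_sub_left hij _
  have h2 : l.colLen j - i ≤ l.colLen i - i :=
    Nat.sub_le_sub_right (l.colLen_anti i j hij) _
  simp only [hook]
  omega

lemma hook_diag_le_maxHook (l : YoungDiagram) (v : ℕ) :
    hook l (v, v) ≤ maxHook l := by
  have h1 : l.rowLen v - v ≤ l.rowLen 0 :=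
    le_trans (Nat.sub_le _ _) (l.rowLen_anti 0 v (Nat.zero_le v))
  have h2 : l.colLen v - v ≤ l.colLen 0 :=
    le_trans (Nat.sub_le _ _) (l.colLen_anti 0 v (Nat.zero_le v))
  simp only [hook, maxHook]
  omega

lemma sum_rowPart_le (l : YoungDiagram) (M : ℕ) :
    ∑ v ∈ Finset.range M, (l.rowLen v - v) ≤ l.card := by
  classical
  set g : ℕ → Finset (ℕ × ℕ) := fun v => (Finset.Ico v (l.rowLen v)).image (fun j => (v, j)) with hg
  have hcard : ∀ v, (g v).card = l.rowLen v - v := by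
    intro v
    rw [hg]
    rw [Finset.card_image_of_injective _ (fun a b h => by simpa using h)]
    simp [Nat.card_Ico]
  have hdisj : ∀ x ∈ Finset.range M, ∀ y ∈ Finset.range M, x ≠ y → Disjoint (g x) (g y) := by
    intro x _ y _ hxy
    simp only [Finset.disjoint_left, hg, Finset.mem_image]
    rintro a ⟨j, _, rfl⟩ ⟨j', _, h⟩
    exact hxy (by simpa using congrArg Prod.fst h.symm)
  have hsub : (Finset.range M).biUnion g ⊆ l.cells := by
    intro u hu
    simp only [Finset.mem_biUnion, hg, Finset.mem_image] at hu
    obtain ⟨v, _, j, hj, rfl⟩ := hu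
    rw [YoungDiagram.mem_cells, YoungDiagram.mem_iff_lt_rowLen]
    exact (Finset.mem_Ico.mp hj).2
  calc ∑ v ∈ Finset.range M, (l.rowLen v - v) = ∑ v ∈ Finset.range M, (g v).card := by
        simp [hcard]
    _ = ((Finset.range M).biUnion g).card := (Finset.card_biUnion hdisj).symm
    _ ≤ l.cells.card := Finset.card_le_card hsub
    _ = l.card := rfl

lemma sum_colPart_le (l : YoungDiagram) (M : ℕ) :
    ∑ v ∈ Finset.range M, (l.colLen v - v) ≤ l.card := by
  classical
  set g : ℕ → Finset (ℕ × ℕ) := fun v => (Finset.Ico v (l.colLen v)).image (fun i => (i, v)) with hg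
  have hcard : ∀ v, (g v).card = l.colLen v - v := by
    intro v
    rw [hg]
    rw [Finset.card_image_of_injective _ (fun a b h => by simpa using h)]
    simp [Nat.card_Ico]
  have hdisj : ∀ x ∈ Finset.range M, ∀ y ∈ Finset.range M, x ≠ y → Disjoint (g x) (g y) := by
    intro x _ y _ hxy
    simp only [Finset.disjoint_left, hg, Finset.mem_image]
    rintro a ⟨j, _, rfl⟩ ⟨j', _, h⟩
    exact hxy (by simpa using congrArg Prod.snd h.symm)
  have hsub : (Finset.range M).biUnion g ⊆ l.cells := by
    intro u hu
    simp only [Finset.mem_biUnion, hg, Finset.mem_image] at hu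
    obtain ⟨v, _, i, hi, rfl⟩ := hu
    rw [YoungDiagram.mem_cells, YoungDiagram.mem_iff_lt_colLen]
    exact (Finset.mem_Ico.mp hi).2
  calc ∑ v ∈ Finset.range M, (l.colLen v - v) = ∑ v ∈ Finset.range M, (g v).card := by
        simp [hcard]
    _ = ((Finset.range M).biUnion g).card := (Finset.card_biUnion hdisj).symm
    _ ≤ l.cells.card := Finset.card_le_card hsub
    _ = l.card := rfl

lemma sum_hook_diag_le (l : YoungDiagram) (M : ℕ) :
    ∑ v ∈ Finset.range M, hook l (v, v) ≤ 2 * l.card := by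
  have h1 : ∀ v, hook l (v, v) ≤ (l.rowLen v - v) + (l.colLen v - v) := by
    intro v; simp only [hook]; omega
  calc ∑ v ∈ Finset.range M, hook l (v, v)
      ≤ ∑ v ∈ Finset.range M, ((l.rowLen v - v) + (l.colLen v - v)) :=
        Finset.sum_le_sum (fun v _ => h1 v)
    _ = (∑ v ∈ Finset.range M, (l.rowLen v - v)) + ∑ v ∈ Finset.range M, (l.colLen v - v) :=
        Finset.sum_add_distrib
    _ ≤ l.card + l.card := Nat.add_le_add (sum_rowPart_le l M) (sum_colPart_le l M)
    _ = 2 * l.card := by ring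


/-- Invariant describing excited diagrams of a row. -/
def GoodRow (l : YoungDiagram) (ℓ : ℕ) (E : Finset (ℕ × ℕ)) : Prop :=
  ∃ d : ℕ → ℕ, (∀ c, c + 1 < ℓ → d c ≤ d (c + 1)) ∧
    (∀ c < ℓ, (d c, c + d c) ∈ l.cells) ∧
    E = (Finset.range ℓ).image (fun c => (d c, c + d c))

lemma goodRow_init (l : YoungDiagram) (ℓ : ℕ) (h2 : ℓ ≤ l.rowLen 0) :
    GoodRow l ℓ (rowDiagram ℓ).cells := by
  refine ⟨fun _ => 0, fun _ _ => le_rfl, ?_, ?_⟩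
  · intro c hc
    have : (0, c) ∈ l := by rw [YoungDiagram.mem_iff_lt_rowLen]; omega
    simpa using this
  · ext ⟨i, j⟩
    simp only [rowDiagram, rect, YoungDiagram.mem_cells, Finset.mem_product, Finset.mem_range,
      Finset.mem_image, Prod.mk.injEq]
    constructor
    · rintro ⟨hi, hj⟩
      exact ⟨j, hj, by omega, by omega⟩
    · rintro ⟨c, hc, rfl, rfl⟩
      omega

lemma goodRow_step {l : YoungDiagram} {ℓ : ℕ} {E E' : Finset (ℕ × ℕ)}
    (hstep : ExciteStep l E E') (hE : GoodRow l ℓ E) : GoodRow l ℓ E' := by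
  classical
  obtain ⟨d, hmono, hcell, rfl⟩ := hE
  obtain ⟨u, hu, hURS, hinter, rfl⟩ := hstep
  have hfinj : Function.Injective (fun c => (d c, c + d c)) := by
    intro a b hab
    simp only [Prod.mk.injEq] at hab
    omega
  obtain ⟨c₀, hc₀, rfl⟩ := Finset.mem_image.mp hu
  have hc₀ℓ : c₀ < ℓ := Finset.mem_range.mp hc₀
  have hnext : ∀ _ : c₀ + 1 < ℓ, d c₀ < d (c₀ + 1) := by
    intro hc
    by_contra hlt
    push_neg at hlt
    have heq : d (c₀ + 1) = d c₀ := le_antisymm hlt (hmono c₀ hc)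
    have hmem : (d (c₀ + 1), (c₀ + 1) + d (c₀ + 1)) ∈
        (Finset.range ℓ).image (fun c => (d c, c + d c)) :=
      Finset.mem_image_of_mem _ (Finset.mem_range.mpr hc)
    have hpt : ((d (c₀ + 1), (c₀ + 1) + d (c₀ + 1)) : ℕ × ℕ) = (d c₀, c₀ + d c₀ + 1) := by
      rw [heq, Prod.mk.injEq]
      omega
    have hmem2 : (d (c₀ + 1), (c₀ + 1) + d (c₀ + 1)) ∈ URS (d c₀, c₀ + d c₀) := by
      rw [hpt]
      simp [URS]
    have hin : (d (c₀ + 1), (c₀ + 1) + d (c₀ + 1)) ∈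
        ((Finset.range ℓ).image (fun c => (d c, c + d c))) ∩ URS (d c₀, c₀ + d c₀) :=
      Finset.mem_inter.mpr ⟨hmem, hmem2⟩
    rw [hinter, Finset.mem_singleton, Prod.mk.injEq] at hin
    omega
  set d' : ℕ → ℕ := fun c => if c = c₀ then d c₀ + 1 else d c with hd'
  have hd'c₀ : d' c₀ = d c₀ + 1 := by simp [hd']
  have hd'ne : ∀ c, c ≠ c₀ → d' c = d c := by intro c hc; simp [hd', hc]
  refine ⟨d', ?_, ?_, ?_⟩
  · intro c hc
    rcases eq_or_ne c c₀ with rfl | hne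
    · rw [hd'c₀, hd'ne _ (by omega)]
      exact hnext hc
    · rcases eq_or_ne (c + 1) c₀ with he | hne2
      · rw [hd'ne _ hne, he, hd'c₀]
        have := hmono c hc
        rw [he] at this
        omega
      · rw [hd'ne _ hne, hd'ne _ hne2]
        exact hmono c hc
  · intro c hc
    rcases eq_or_ne c c₀ with heq | hne
    · rw [heq, hd'c₀]
      apply hURS
      have : ((d c₀ + 1, c₀ + (d c₀ + 1)) : ℕ × ℕ) = (d c₀ + 1, (c₀ + d c₀) + 1) := by
        rw [Prod.mk.injEq]; omega
      rw [this]
      simp [URS]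
    · rw [hd'ne _ hne]
      exact hcell c hc
  · ext x
    simp only [Finset.mem_insert, Finset.mem_erase, Finset.mem_image, Finset.mem_range]
    constructor
    · rintro (rfl | ⟨hxne, c, hc, rfl⟩)
      · refine ⟨c₀, hc₀ℓ, ?_⟩
        rw [hd'c₀, Prod.mk.injEq]
        constructor <;> omega
      · refine ⟨c, hc, ?_⟩
        have hcne : c ≠ c₀ := by
          intro h
          subst h
          exact hxne rfl
        rw [hd'ne _ hcne]
    · rintro ⟨c, hc, rfl⟩
      rcases eq_or_ne c c₀ with rfl | hne
      · left
        rw [hd'c₀, Prod.mk.injEq]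
        constructor <;> omega
      · right
        rw [hd'ne _ hne]
        refine ⟨?_, c, hc, rfl⟩
        intro h
        exact hne (hfinj h)

lemma goodRow_of_excited {l : YoungDiagram} {ℓ : ℕ} (h2 : ℓ ≤ l.rowLen 0) :
    ∀ E ∈ Excited l (rowDiagram ℓ), GoodRow l ℓ E := by
  intro E hE
  induction hE with
  | refl => exact goodRow_init l ℓ h2
  | tail _ hstep ih => exact goodRow_step hstep ih


lemma mono_of_adj {ℓ : ℕ} {d : ℕ → ℕ} (h : ∀ c, c + 1 < ℓ → d c ≤ d (c + 1)) :
    ∀ c c', c ≤ c' → c' < ℓ → d c ≤ d c' := by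
  intro c c' hcc
  induction c' with
  | zero =>
    intro _
    have : c = 0 := Nat.le_zero.mp hcc
    rw [this]
  | succ m ih =>
    intro hm
    rcases Nat.lt_or_ge c (m + 1) with hlt | hge
    · have h1 : c ≤ m := Nat.lt_succ_iff.mp hlt
      exact le_trans (ih h1 (by omega)) (h m hm)
    · have : c = m + 1 := by omega
      rw [this]

lemma count_le_iff {ℓ : ℕ} {d : ℕ → ℕ} (hd : ∀ c c', c ≤ c' → c' < ℓ → d c ≤ d c')
    {c : ℕ} (hc : c < ℓ) (v : ℕ) :
    d c ≤ v ↔ c < ((Finset.range ℓ).filter (fun c' => d c' ≤ v)).card := by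
  constructor
  · intro h
    have hsub : Finset.range (c + 1) ⊆ (Finset.range ℓ).filter (fun c' => d c' ≤ v) := by
      intro c'' hc''
      rw [Finset.mem_range] at hc''
      rw [Finset.mem_filter, Finset.mem_range]
      exact ⟨by omega, le_trans (hd c'' c (by omega) hc) h⟩
    calc c < c + 1 := Nat.lt_succ_self c
      _ = (Finset.range (c + 1)).card := (Finset.card_range _).symm
      _ ≤ _ := Finset.card_le_card hsub
  · intro h
    by_contra hv
    push_neg at hv
    have hsub : (Finset.range ℓ).filter (fun c' => d c' ≤ v) ⊆ Finset.range c := by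
      intro c' hc'
      rw [Finset.mem_filter, Finset.mem_range] at hc'
      rw [Finset.mem_range]
      by_contra hge
      push_neg at hge
      exact absurd (le_trans (hd c c' hge hc'.1) hc'.2) (by omega)
    have := Finset.card_le_card hsub
    rw [Finset.card_range] at this
    omega

lemma card_le_filter_eq_sum {ℓ : ℕ} (d : ℕ → ℕ) (v : ℕ) :
    ((Finset.range ℓ).filter (fun c' => d c' ≤ v)).card
      = ∑ w ∈ Finset.range (v + 1), ((Finset.range ℓ).filter (fun c' => d c' = w)).card := by
  rw [Finset.card_eq_sum_card_fiberwise (f := d) (t := Finset.range (v + 1))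
    (fun c hc => by rw [Finset.mem_coe, Finset.mem_filter] at hc; rw [Finset.mem_coe, Finset.mem_range]; omega)]
  apply Finset.sum_congr rfl
  intro w hw
  rw [Finset.mem_range] at hw
  congr 1
  rw [Finset.filter_filter]
  apply Finset.filter_congr
  intro c _
  constructor
  · rintro ⟨_, h⟩; exact h
  · intro h; exact ⟨by omega, h⟩

lemma mono_eq_of_count {ℓ : ℕ} {d d' : ℕ → ℕ}
    (hd : ∀ c c', c ≤ c' → c' < ℓ → d c ≤ d c')
    (hd' : ∀ c c', c ≤ c' → c' < ℓ → d' c ≤ d' c')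
    (h : ∀ v, ((Finset.range ℓ).filter (fun c => d c = v)).card
            = ((Finset.range ℓ).filter (fun c => d' c = v)).card) :
    ∀ c < ℓ, d c = d' c := by
  intro c hc
  have key : ∀ v, (d c ≤ v ↔ d' c ≤ v) := by
    intro v
    rw [count_le_iff hd hc v, count_le_iff hd' hc v,
      card_le_filter_eq_sum d v, card_le_filter_eq_sum d' v]
    constructor <;> intro hh <;>
      [rwa [Finset.sum_congr rfl (fun w _ => h w)] at hh;
       rwa [← Finset.sum_congr rfl (fun w _ => h w)] at hh]
  have h1 := (key (d' c)).mpr le_rfl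
  have h2 := (key (d c)).mp le_rfl
  omega

lemma goodRow_f_inj (d : ℕ → ℕ) :
    Function.Injective (fun c => (d c, c + d c)) := by
  intro a b hab
  simp only [Prod.mk.injEq] at hab
  omega

/-- The fiber counts of a good diagram match the fiber counts of its `d`-sequence. -/
lemma goodRow_cnt_eq {ℓ : ℕ} (d : ℕ → ℕ) (v : ℕ) :
    (((Finset.range ℓ).image (fun c => (d c, c + d c))).filter (fun u => u.1 = v)).card
      = ((Finset.range ℓ).filter (fun c => d c = v)).card := by
  classical
  rw [Finset.filter_image, Finset.card_image_of_injective _ (goodRow_f_inj d)]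

lemma goodRow_inj {l : YoungDiagram} {ℓ : ℕ} {E E' : Finset (ℕ × ℕ)}
    (hE : GoodRow l ℓ E) (hE' : GoodRow l ℓ E')
    (h : ∀ v, (E.filter (fun u => u.1 = v)).card = (E'.filter (fun u => u.1 = v)).card) :
    E = E' := by
  classical
  obtain ⟨d, hmono, _, rfl⟩ := hE
  obtain ⟨d', hmono', _, rfl⟩ := hE'
  have hdd : ∀ c < ℓ, d c = d' c := by
    apply mono_eq_of_count (mono_of_adj hmono) (mono_of_adj hmono')
    intro v
    have := h v
    rwa [goodRow_cnt_eq d v, goodRow_cnt_eq d' v] at this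
  apply Finset.image_congr
  intro c hc
  rw [Finset.mem_coe, Finset.mem_range] at hc
  simp only [hdd c hc]

lemma goodRow_row_lt {l : YoungDiagram} {ℓ : ℕ} {E : Finset (ℕ × ℕ)}
    (hE : GoodRow l ℓ E) : ∀ u ∈ E, u.1 < l.colLen 0 := by
  obtain ⟨d, _, hcell, rfl⟩ := hE
  intro u hu
  obtain ⟨c, hc, rfl⟩ := Finset.mem_image.mp hu
  rw [Finset.mem_range] at hc
  have h1 := hcell c hc
  rw [YoungDiagram.mem_cells, YoungDiagram.mem_iff_lt_colLen] at h1
  exact lt_of_lt_of_le h1 (l.colLen_anti 0 (c + d c) (Nat.zero_le _))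

lemma goodRow_subset_cells {l : YoungDiagram} {ℓ : ℕ} {E : Finset (ℕ × ℕ)}
    (hE : GoodRow l ℓ E) : E ⊆ l.cells := by
  obtain ⟨d, _, hcell, rfl⟩ := hE
  intro u hu
  obtain ⟨c, hc, rfl⟩ := Finset.mem_image.mp hu
  exact hcell c (Finset.mem_range.mp hc)

lemma goodRow_cnt_le {ℓ : ℕ} (d : ℕ → ℕ) (v : ℕ) :
    ((Finset.range ℓ).filter (fun c => d c = v)).card ≤ ℓ :=
  le_trans (Finset.card_le_card (Finset.filter_subset _ _)) (le_of_eq (Finset.card_range ℓ))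

lemma goodRow_cnt_sum {ℓ M : ℕ} (d : ℕ → ℕ) (hdM : ∀ c < ℓ, d c < M) :
    ∑ v ∈ Finset.range M, ((Finset.range ℓ).filter (fun c => d c = v)).card = ℓ := by
  rw [← Finset.card_eq_sum_card_fiberwise (f := d) (t := Finset.range M)
    (fun c hc => Finset.mem_range.mpr (hdM c (Finset.mem_range.mp hc))), Finset.card_range]

lemma goodRow_prod_le {l : YoungDiagram} {ℓ M : ℕ} (d : ℕ → ℕ)
    (hcell : ∀ c < ℓ, (d c, c + d c) ∈ l.cells) (hdM : ∀ c < ℓ, d c < M) :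
    ∏ u ∈ (Finset.range ℓ).image (fun c => (d c, c + d c)), hook l u
      ≤ ∏ v ∈ Finset.range M, hook l (v, v) ^ ((Finset.range ℓ).filter (fun c => d c = v)).card := by
  classical
  rw [Finset.prod_image (fun a ha b hb hab => goodRow_f_inj d hab)]
  calc ∏ c ∈ Finset.range ℓ, hook l (d c, c + d c)
      ≤ ∏ c ∈ Finset.range ℓ, hook l (d c, d c) :=
        Finset.prod_le_prod' (fun c _ => hook_le_diag l (Nat.le_add_left _ _))
    _ = ∏ v ∈ (Finset.range ℓ).image d, hook l (v, v)
          ^ ((Finset.range ℓ).filter (fun c => d c = v)).card :=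
        Finset.prod_comp (fun v => hook l (v, v)) d
    _ ≤ ∏ v ∈ Finset.range M, hook l (v, v)
          ^ ((Finset.range ℓ).filter (fun c => d c = v)).card := by
        apply le_of_eq
        apply Finset.prod_subset
        · intro v hv
          obtain ⟨c, hc, rfl⟩ := Finset.mem_image.mp hv
          exact Finset.mem_range.mpr (hdM c (Finset.mem_range.mp hc))
        · intro v _ hv
          have : (Finset.range ℓ).filter (fun c => d c = v) = ∅ := by
            rw [Finset.filter_eq_empty_iff]
            intro c hc hdc
            exact hv (Finset.mem_image.mpr ⟨c, hc, hdc⟩)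
          rw [this, Finset.card_empty, pow_zero]


lemma geom_exp_bound {x : ℝ} (h0 : 0 ≤ x) (h4 : x ≤ 1 / 4) (m : ℕ) :
    ∑ k ∈ Finset.range m, x ^ k ≤ Real.exp (4 * x / 3) := by
  have hx1 : x < 1 := by linarith
  have key : (∑ k ∈ Finset.range m, x ^ k) * (1 - x) = 1 - x ^ m := by
    have := geom_sum_mul x m
    nlinarith [this]
  have hxm : 0 ≤ x ^ m := pow_nonneg h0 m
  have h5 : (∑ k ∈ Finset.range m, x ^ k) * (1 - x) ≤ 1 := by nlinarith
  have h6 : ∑ k ∈ Finset.range m, x ^ k ≤ 1 + 4 * x / 3 := by nlinarith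
  have h7 : 4 * x / 3 + 1 ≤ Real.exp (4 * x / 3) := Real.add_one_le_exp _
  linarith

lemma exp_twothirds_le_two : Real.exp (2 / 3) ≤ 2 := by
  have h := Real.log_two_gt_d9
  have : (2 : ℝ) / 3 ≤ Real.log 2 := by norm_num at h ⊢; linarith
  calc Real.exp (2 / 3) ≤ Real.exp (Real.log 2) := Real.exp_le_exp.mpr this
    _ = 2 := Real.exp_log (by norm_num)


end AuxLemmas

set_option maxHeartbeats 1000000 in
/-- bound on the excited sum of a short row. -/
theorem excited_sum_row_small (l : YoungDiagram) (ℓ : ℕ) (h1 : 1 ≤ ℓ) (h2 : ℓ ≤ l.rowLen 0)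
    (h3 : (ℓ : ℝ) ≤ (l.card : ℝ) / (maxHook l : ℝ)) :
    (excitedSum l (rowDiagram ℓ) : ℝ) ≤ (8 * (l.card : ℝ) / (ℓ : ℝ)) ^ ℓ := by
  classical
  have hrow0 : 1 ≤ l.rowLen 0 := le_trans h1 h2
  have h00 : (0, 0) ∈ l := by rw [YoungDiagram.mem_iff_lt_rowLen]; omega
  have hM1 : 1 ≤ l.colLen 0 := by
    have := (YoungDiagram.mem_iff_lt_colLen).mp h00; omega
  have hs1 : 1 ≤ maxHook l := by
    simp only [maxHook]; omega
  have hn1 : 1 ≤ l.card := Finset.card_pos.mpr ⟨(0, 0), (YoungDiagram.mem_cells _).mpr h00⟩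
  set M := l.colLen 0 with hM
  set nR : ℝ := (l.card : ℝ) with hnR
  set sR : ℝ := (maxHook l : ℝ) with hsR
  have hnR0 : (1 : ℝ) ≤ nR := by rw [hnR]; exact_mod_cast hn1
  have hsR0 : (1 : ℝ) ≤ sR := by rw [hsR]; exact_mod_cast hs1
  have hℓ0 : (0 : ℝ) < (ℓ : ℝ) := by exact_mod_cast h1
  have hsn : (ℓ : ℝ) * sR ≤ nR := (le_div_iff₀ (by linarith)).mp h3
  set t : ℝ := (ℓ : ℝ) / (4 * nR) with ht
  have ht0 : 0 < t := by rw [ht]; positivity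
  -- the excited set is finite and consists of good diagrams
  have hGood : ∀ E ∈ Excited l (rowDiagram ℓ), GoodRow l ℓ E := goodRow_of_excited h2
  have hfin : (Excited l (rowDiagram ℓ)).Finite := by
    apply Set.Finite.subset (l.cells.powerset.finite_toSet)
    intro E hE
    rw [Finset.mem_coe, Finset.mem_powerset]
    exact goodRow_subset_cells (hGood E hE)
  have hsum : excitedSum l (rowDiagram ℓ) = ∑ E ∈ hfin.toFinset, ∏ u ∈ E, hook l u :=
    finsum_mem_eq_finite_toFinset_sum _ hfin
  set T := hfin.toFinset with hT
  have hTmem : ∀ E ∈ T, GoodRow l ℓ E := fun E hE => hGood E (hfin.mem_toFinset.mp hE)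
  -- the injection into count vectors
  set Φ : Finset (ℕ × ℕ) → (Fin M → Fin (ℓ + 1)) := fun E v =>
    ⟨min ((E.filter (fun u => u.1 = (v : ℕ))).card) ℓ, by omega⟩ with hΦ
  set F : (Fin M → Fin (ℓ + 1)) → ℝ := fun g =>
    ∏ v : Fin M, ((hook l ((v : ℕ), (v : ℕ)) : ℝ) * t) ^ ((g v : ℕ)) with hF
  have hcntM : ∀ E ∈ T, ∀ v, M ≤ v → (E.filter (fun u => u.1 = v)).card = 0 := by
    intro E hE v hv
    rw [Finset.card_eq_zero, Finset.filter_eq_empty_iff]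
    intro u hu hr
    have := goodRow_row_lt (hTmem E hE) u hu
    omega
  have hcntle : ∀ E ∈ T, ∀ v, (E.filter (fun u => u.1 = v)).card ≤ ℓ := by
    intro E hE v
    obtain ⟨d, hmono, hcell, hEeq⟩ := hTmem E hE
    rw [hEeq, goodRow_cnt_eq d v]
    exact goodRow_cnt_le d v
  -- key bound for each excited diagram
  have keyE : ∀ E ∈ T, ((∏ u ∈ E, hook l u : ℕ) : ℝ) * t ^ ℓ ≤ F (Φ E) := by
    intro E hE
    obtain ⟨d, hmono, hcell, hEeq⟩ := hTmem E hE
    have hdM : ∀ c < ℓ, d c < M := by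
      intro c hc
      have := goodRow_row_lt ⟨d, hmono, hcell, hEeq⟩ (d c, c + d c)
        (by rw [hEeq]; exact Finset.mem_image_of_mem _ (Finset.mem_range.mpr hc))
      simpa using this
    have hcnt : ∀ v, (E.filter (fun u => u.1 = v)).card
        = ((Finset.range ℓ).filter (fun c => d c = v)).card := by
      intro v
      rw [hEeq]
      exact goodRow_cnt_eq d v
    have hΦval : ∀ v : Fin M, ((Φ E v : ℕ))
        = ((Finset.range ℓ).filter (fun c => d c = (v : ℕ))).card := by
      intro v
      simp only [hΦ]
      rw [hcnt]
      exact min_eq_left (goodRow_cnt_le d _)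
    have hprod : (∏ u ∈ E, hook l u) ≤ ∏ v ∈ Finset.range M,
        hook l (v, v) ^ ((Finset.range ℓ).filter (fun c => d c = v)).card := by
      rw [hEeq]
      exact goodRow_prod_le d hcell hdM
    have hsumcnt : ∑ v ∈ Finset.range M,
        ((Finset.range ℓ).filter (fun c => d c = v)).card = ℓ := goodRow_cnt_sum d hdM
    have hFeq : F (Φ E) = (∏ v ∈ Finset.range M,
        ((hook l (v, v) : ℝ)) ^ ((Finset.range ℓ).filter (fun c => d c = v)).card) * t ^ ℓ := by
      rw [hF]
      calc ∏ v : Fin M, ((hook l ((v : ℕ), (v : ℕ)) : ℝ) * t) ^ ((Φ E v : ℕ))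
          = ∏ v : Fin M, ((hook l ((v : ℕ), (v : ℕ)) : ℝ) * t)
              ^ ((Finset.range ℓ).filter (fun c => d c = (v : ℕ))).card := by
            exact Finset.prod_congr rfl (fun v _ => by rw [hΦval v])
        _ = ∏ v ∈ Finset.range M, ((hook l (v, v) : ℝ) * t)
              ^ ((Finset.range ℓ).filter (fun c => d c = v)).card :=
            Fin.prod_univ_eq_prod_range
              (fun v => ((hook l (v, v) : ℝ) * t)
                ^ ((Finset.range ℓ).filter (fun c => d c = v)).card) M
        _ = (∏ v ∈ Finset.range M,
              ((hook l (v, v) : ℝ)) ^ ((Finset.range ℓ).filter (fun c => d c = v)).card)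
            * ∏ v ∈ Finset.range M,
              t ^ ((Finset.range ℓ).filter (fun c => d c = v)).card := by
            rw [← Finset.prod_mul_distrib]
            exact Finset.prod_congr rfl (fun v _ => mul_pow _ _ _)
        _ = (∏ v ∈ Finset.range M,
              ((hook l (v, v) : ℝ)) ^ ((Finset.range ℓ).filter (fun c => d c = v)).card)
            * t ^ ℓ := by
            rw [Finset.prod_pow_eq_pow_sum, hsumcnt]
    rw [hFeq]
    apply mul_le_mul_of_nonneg_right _ (le_of_lt (pow_pos ht0 ℓ))
    calc ((∏ u ∈ E, hook l u : ℕ) : ℝ)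
        ≤ ((∏ v ∈ Finset.range M,
            hook l (v, v) ^ ((Finset.range ℓ).filter (fun c => d c = v)).card : ℕ) : ℝ) := by
          exact_mod_cast hprod
      _ = ∏ v ∈ Finset.range M,
            ((hook l (v, v) : ℝ)) ^ ((Finset.range ℓ).filter (fun c => d c = v)).card := by
          push_cast
          rfl
  -- injectivity of the count map on excited diagrams
  have hinjΦ : ∀ E ∈ T, ∀ E' ∈ T, Φ E = Φ E' → E = E' := by
    intro E hE E' hE' heq
    apply goodRow_inj (hTmem E hE) (hTmem E' hE')
    intro v
    rcases lt_or_ge v M with hv | hv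
    · have h0 := congrFun heq ⟨v, hv⟩
      simp only [hΦ] at h0
      rw [Fin.mk.injEq] at h0
      rw [min_eq_left (hcntle E hE v), min_eq_left (hcntle E' hE' v)] at h0
      exact h0
    · rw [hcntM E hE v hv, hcntM E' hE' v hv]
  have hFnonneg : ∀ g, 0 ≤ F g := by
    intro g
    rw [hF]
    exact Finset.prod_nonneg
      (fun v _ => pow_nonneg (mul_nonneg (Nat.cast_nonneg _) ht0.le) _)
  -- summing up
  have hstep1 : (∑ E ∈ T, ((∏ u ∈ E, hook l u : ℕ) : ℝ)) * t ^ ℓ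
      ≤ ∑ g : Fin M → Fin (ℓ + 1), F g := by
    rw [Finset.sum_mul]
    calc ∑ E ∈ T, ((∏ u ∈ E, hook l u : ℕ) : ℝ) * t ^ ℓ
        ≤ ∑ E ∈ T, F (Φ E) := Finset.sum_le_sum keyE
      _ = ∑ g ∈ T.image Φ, F g := (Finset.sum_image hinjΦ).symm
      _ ≤ ∑ g ∈ Finset.univ, F g :=
          Finset.sum_le_sum_of_subset_of_nonneg (Finset.subset_univ _)
            (fun g _ _ => hFnonneg g)
  have hstep2 : ∑ g : Fin M → Fin (ℓ + 1), F g
      = ∏ v : Fin M, ∑ k : Fin (ℓ + 1), ((hook l ((v : ℕ), (v : ℕ)) : ℝ) * t) ^ (k : ℕ) := by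
    rw [Finset.prod_univ_sum (fun _ => Finset.univ)
      (fun (v : Fin M) (k : Fin (ℓ + 1)) => ((hook l ((v : ℕ), (v : ℕ)) : ℝ) * t) ^ (k : ℕ)),
      Fintype.piFinset_univ]
  have hx14 : ∀ v : ℕ, 0 ≤ (hook l (v, v) : ℝ) * t ∧ (hook l (v, v) : ℝ) * t ≤ 1 / 4 := by
    intro v
    constructor
    · exact mul_nonneg (Nat.cast_nonneg _) ht0.le
    · have hy : (hook l (v, v) : ℝ) ≤ sR := by
        rw [hsR]
        exact_mod_cast hook_diag_le_maxHook l v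
      have h14 : sR * t ≤ 1 / 4 := by
        rw [ht, mul_div_assoc']
        rw [div_le_iff₀ (by linarith)]
        nlinarith
      calc (hook l (v, v) : ℝ) * t ≤ sR * t := mul_le_mul_of_nonneg_right hy ht0.le
        _ ≤ 1 / 4 := h14
  have hstep3 : ∏ v : Fin M, ∑ k : Fin (ℓ + 1), ((hook l ((v : ℕ), (v : ℕ)) : ℝ) * t) ^ (k : ℕ)
      ≤ ∏ v : Fin M, Real.exp (4 * ((hook l ((v : ℕ), (v : ℕ)) : ℝ) * t) / 3) := by
    apply Finset.prod_le_prod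
    · intro v _
      exact Finset.sum_nonneg (fun k _ => pow_nonneg (hx14 (v : ℕ)).1 _)
    · intro v _
      rw [Fin.sum_univ_eq_sum_range (fun k => ((hook l ((v : ℕ), (v : ℕ)) : ℝ) * t) ^ k) (ℓ + 1)]
      exact geom_exp_bound (hx14 (v : ℕ)).1 (hx14 (v : ℕ)).2 (ℓ + 1)
  have hstep4 : ∏ v : Fin M, Real.exp (4 * ((hook l ((v : ℕ), (v : ℕ)) : ℝ) * t) / 3)
      ≤ (2 : ℝ) ^ ℓ := by
    rw [← Real.exp_sum]
    have hsy : ∑ v : Fin M, 4 * ((hook l ((v : ℕ), (v : ℕ)) : ℝ) * t) / 3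
        = (4 * t / 3) * ∑ v ∈ Finset.range M, (hook l (v, v) : ℝ) := by
      rw [Fin.sum_univ_eq_sum_range (fun v => 4 * ((hook l (v, v) : ℝ) * t) / 3) M,
        Finset.mul_sum]
      exact Finset.sum_congr rfl (fun v _ => by ring)
    have hyn : ∑ v ∈ Finset.range M, (hook l (v, v) : ℝ) ≤ 2 * nR := by
      have := sum_hook_diag_le l M
      rw [hnR]
      calc ∑ v ∈ Finset.range M, (hook l (v, v) : ℝ)
          = ((∑ v ∈ Finset.range M, hook l (v, v) : ℕ) : ℝ) := by push_cast; rfl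
        _ ≤ ((2 * l.card : ℕ) : ℝ) := by exact_mod_cast this
        _ = 2 * (l.card : ℝ) := by push_cast; ring
    have hexp : ∑ v : Fin M, 4 * ((hook l ((v : ℕ), (v : ℕ)) : ℝ) * t) / 3 ≤ (ℓ : ℝ) * (2 / 3) := by
      rw [hsy]
      have h4t : 0 ≤ 4 * t / 3 := by linarith [ht0.le]
      calc (4 * t / 3) * ∑ v ∈ Finset.range M, (hook l (v, v) : ℝ)
          ≤ (4 * t / 3) * (2 * nR) := mul_le_mul_of_nonneg_left hyn h4t
        _ = (ℓ : ℝ) * (2 / 3) := by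
            rw [ht]
            field_simp
    calc Real.exp (∑ v : Fin M, 4 * ((hook l ((v : ℕ), (v : ℕ)) : ℝ) * t) / 3)
        ≤ Real.exp ((ℓ : ℝ) * (2 / 3)) := Real.exp_le_exp.mpr hexp
      _ = (Real.exp (2 / 3)) ^ ℓ := Real.exp_nat_mul _ ℓ
      _ ≤ (2 : ℝ) ^ ℓ := pow_le_pow_left₀ (Real.exp_nonneg _) exp_twothirds_le_two ℓ
  -- conclusion
  have hfinal : (∑ E ∈ T, ((∏ u ∈ E, hook l u : ℕ) : ℝ)) * t ^ ℓ ≤ (2 : ℝ) ^ ℓ := by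
    calc (∑ E ∈ T, ((∏ u ∈ E, hook l u : ℕ) : ℝ)) * t ^ ℓ
        ≤ ∑ g : Fin M → Fin (ℓ + 1), F g := hstep1
      _ = ∏ v : Fin M, ∑ k : Fin (ℓ + 1), ((hook l ((v : ℕ), (v : ℕ)) : ℝ) * t) ^ (k : ℕ) := hstep2
      _ ≤ ∏ v : Fin M, Real.exp (4 * ((hook l ((v : ℕ), (v : ℕ)) : ℝ) * t) / 3) := hstep3
      _ ≤ (2 : ℝ) ^ ℓ := hstep4
  have hSeq : (excitedSum l (rowDiagram ℓ) : ℝ) = ∑ E ∈ T, ((∏ u ∈ E, hook l u : ℕ) : ℝ) := by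
    rw [hsum]
    push_cast
    rfl
  rw [hSeq]
  have h2t : (8 : ℝ) * nR / (ℓ : ℝ) = 2 / t := by
    rw [ht]
    field_simp
    ring
  rw [h2t, div_pow]
  rw [le_div_iff₀ (pow_pos ht0 ℓ)]
  exact hfinal

end ThickHookPaper
end
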